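/- arXiv:1605.06586 — 6 statements merged into one kernel-verified Lean document; each statement's English description precedes it below -/
import Mathlib

section
/- Gibbs states are passive: let H be an n×n Hermitian complex matrix and β ≥ 0 a real number. Then for every unitary n×n matrix U, Tr(exp(−βH) · U* H U) ≥ Tr(exp(−βH) · H). Equivalently, the Gibbs expectation ω_β(a) = Tr(a·exp(−βH))/Tr(exp(−βH)) satisfies ω_β(U*[H,U]) ≥ 0 for every unitary U, where [H,U] = HU − UH. -/
open scoped Matrix
open NormedSpace -- for `exp`

/-- Key scalar inequality: doubly-stochastic averaging against a decreasing
exponential weight can only increase the expectation. -/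
lemma gibbs_key {n : ℕ} (b : Fin n → ℝ) (β : ℝ) (hβ : 0 ≤ β)
    (p : Fin n → Fin n → ℝ) (hp : ∀ i j, 0 ≤ p i j)
    (hrow : ∀ i, ∑ j, p i j = 1) (hcol : ∀ j, ∑ i, p i j = 1) :
    ∑ i, Real.exp (-β * b i) * b i ≤ ∑ i, ∑ j, p i j * (Real.exp (-β * b i) * b j) := by
  rcases eq_or_lt_of_le hβ with h0 | hpos
  · subst h0
    simp only [neg_zero, zero_mul, Real.exp_zero, one_mul]
    apply le_of_eq
    rw [Finset.sum_comm]
    have h : ∀ j, ∑ i, p i j * b j = b j := fun j => by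
      rw [← Finset.sum_mul, hcol, one_mul]
    simp [h]
  · -- β > 0
    have hS : 0 ≤ ∑ i, ∑ j, p i j * (Real.exp (-β * b i) * (b j - b i)) := by
      have hβS : 0 ≤ β * ∑ i, ∑ j, p i j * (Real.exp (-β * b i) * (b j - b i)) := by
        have hpt : ∀ i j, Real.exp (-β * b i) - Real.exp (-β * b j) ≤
            β * (Real.exp (-β * b i) * (b j - b i)) := by
          intro i j
          have h1 : -β * (b j - b i) + 1 ≤ Real.exp (-β * (b j - b i)) :=
            Real.add_one_le_exp _
          have h2 := mul_le_mul_of_nonneg_left h1 (Real.exp_pos (-β * b i)).le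
          rw [← Real.exp_add] at h2
          have h3 : -β * b i + -β * (b j - b i) = -β * b j := by ring
          rw [h3] at h2
          nlinarith [Real.exp_pos (-β * b i)]
        calc (0:ℝ) = ∑ i, ∑ j, p i j * (Real.exp (-β * b i) - Real.exp (-β * b j)) := by
              have : ∑ i, ∑ j, p i j * (Real.exp (-β * b i) - Real.exp (-β * b j))
                  = (∑ i, ∑ j, p i j * Real.exp (-β * b i))
                    - ∑ i, ∑ j, p i j * Real.exp (-β * b j) := by
                simp [mul_sub, Finset.sum_sub_distrib]
              rw [this]
              have hA : (∑ i, ∑ j, p i j * Real.exp (-β * b i)) = ∑ i, Real.exp (-β * b i) := by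
                simp [← Finset.sum_mul, hrow]
              have hB : (∑ i, ∑ j, p i j * Real.exp (-β * b j)) = ∑ j, Real.exp (-β * b j) := by
                rw [Finset.sum_comm]
                simp [← Finset.sum_mul, hcol]
              rw [hA, hB]; ring
          _ ≤ ∑ i, ∑ j, p i j * (β * (Real.exp (-β * b i) * (b j - b i))) := by
              apply Finset.sum_le_sum; intro i _
              apply Finset.sum_le_sum; intro j _
              exact mul_le_mul_of_nonneg_left (hpt i j) (hp i j)
          _ = β * ∑ i, ∑ j, p i j * (Real.exp (-β * b i) * (b j - b i)) := by
              rw [Finset.mul_sum]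
              congr 1; ext i
              rw [Finset.mul_sum]
              congr 1; ext j; ring
      exact nonneg_of_mul_nonneg_right hβS hpos
    have expand : ∑ i, ∑ j, p i j * (Real.exp (-β * b i) * b j)
        = (∑ i, Real.exp (-β * b i) * b i)
          + ∑ i, ∑ j, p i j * (Real.exp (-β * b i) * (b j - b i)) := by
      have : ∀ i, ∑ j, p i j * (Real.exp (-β * b i) * b j)
          = Real.exp (-β * b i) * b i + ∑ j, p i j * (Real.exp (-β * b i) * (b j - b i)) := by
        intro i
        have : ∑ j, p i j * (Real.exp (-β * b i) * (b j - b i))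
            = (∑ j, p i j * (Real.exp (-β * b i) * b j))
              - (∑ j, p i j) * (Real.exp (-β * b i) * b i) := by
          rw [Finset.sum_mul, ← Finset.sum_sub_distrib]
          congr 1; ext j; ring
        rw [this, hrow]; ring
      rw [Finset.sum_congr rfl (fun i _ => this i), Finset.sum_add_distrib]
    linarith [expand, hS]

open scoped Matrix

section Aux
variable {n : ℕ}

/-- Trace of `diagonal a * Vᴴ * diagonal b * V` entrywise. -/
lemma trace_diag_conj (a b : Fin n → ℂ) (V : Matrix (Fin n) (Fin n) ℂ) :
    Matrix.trace (Matrix.diagonal a * (Vᴴ * Matrix.diagonal b * V))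
      = ∑ i, ∑ j, a i * ((starRingEnd ℂ) (V j i) * b j * V j i) := by
  simp [Matrix.trace, Matrix.mul_apply, Matrix.diag, Matrix.diagonal, Finset.mul_sum,
    Matrix.conjTranspose_apply, mul_assoc, mul_comm, mul_left_comm]

end Aux

/-- **Gibbs states are passive.**
For an `n × n` Hermitian complex matrix `H`, an inverse temperature `β ≥ 0` and any
unitary `U`, one has `Tr(exp(-βH) · U* H U) ≥ Tr(exp(-βH) · H)`; both traces are real,
and we compare their real parts. -/
theorem gibbs_state_passive {n : ℕ}
    (H : Matrix (Fin n) (Fin n) ℂ) (hH : H.IsHermitian)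
    (β : ℝ) (hβ : 0 ≤ β)
    (U : Matrix (Fin n) (Fin n) ℂ) (hU : U ∈ Matrix.unitaryGroup (Fin n) ℂ) :
    (Matrix.trace (exp ((-β : ℂ) • H) * H)).re ≤
      (Matrix.trace (exp ((-β : ℂ) • H) * (Uᴴ * H * U))).re := by
  set W : Matrix (Fin n) (Fin n) ℂ := (hH.eigenvectorUnitary : Matrix (Fin n) (Fin n) ℂ) with hWdef
  set b : Fin n → ℝ := hH.eigenvalues with hbdef
  set a : Fin n → ℝ := fun i => Real.exp (-β * b i) with hadef
  have hWmem : W ∈ Matrix.unitaryGroup (Fin n) ℂ := (hH.eigenvectorUnitary).2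
  have hWsW : Wᴴ * W = 1 := by
    simpa [Matrix.star_eq_conjTranspose] using hWmem.1
  have hWWs : W * Wᴴ = 1 := by
    simpa [Matrix.star_eq_conjTranspose] using hWmem.2
  have hWunit : IsUnit W := ⟨⟨W, Wᴴ, hWWs, hWsW⟩, rfl⟩
  have hWinv : W⁻¹ = Wᴴ := Matrix.inv_eq_right_inv hWWs
  have hspec : H = W * Matrix.diagonal (fun i => (b i : ℂ)) * Wᴴ := by
    have := hH.spectral_theorem
    exact this
  -- the matrix exponential as a conjugated diagonal
  have hexp : exp ((-β : ℂ) • H) = W * Matrix.diagonal (fun i => (a i : ℂ)) * Wᴴ := by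
    have h1 : (-β : ℂ) • H = W * Matrix.diagonal (fun i => ((-β * b i : ℝ) : ℂ)) * W⁻¹ := by
      rw [hWinv, hspec]
      have hf : (fun i => ((-β * b i : ℝ) : ℂ)) = (-β : ℂ) • fun i => ((b i : ℝ) : ℂ) := by
        funext i
        simp only [Pi.smul_apply, smul_eq_mul]
        push_cast
        ring
      rw [hf, Matrix.diagonal_smul, Matrix.mul_smul, Matrix.smul_mul]
    rw [h1, Matrix.exp_conj W _ hWunit, Matrix.exp_diagonal, hWinv]
    have hfun : (exp fun i => ((-β * b i : ℝ) : ℂ)) = fun i => ((a i : ℝ) : ℂ) := by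
      funext i
      rw [Pi.exp_def, ← Complex.exp_eq_exp_ℂ]
      show Complex.exp ((-β * b i : ℝ) : ℂ) = ((a i : ℝ) : ℂ)
      rw [← Complex.ofReal_exp]
    rw [hfun]
  set V : Matrix (Fin n) (Fin n) ℂ := Wᴴ * U * W with hVdef
  have hUsU : Uᴴ * U = 1 := by simpa [Matrix.star_eq_conjTranspose] using hU.1
  have hUUs : U * Uᴴ = 1 := by simpa [Matrix.star_eq_conjTranspose] using hU.2
  have hVsV : Vᴴ * V = 1 := by
    rw [hVdef]
    simp only [Matrix.conjTranspose_mul, Matrix.conjTranspose_conjTranspose, Matrix.mul_assoc]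
    rw [← Matrix.mul_assoc W Wᴴ, hWWs, Matrix.one_mul, ← Matrix.mul_assoc Uᴴ U, hUsU,
      Matrix.one_mul, hWsW]
  have hVVs : V * Vᴴ = 1 := by
    rw [hVdef]
    simp only [Matrix.conjTranspose_mul, Matrix.conjTranspose_conjTranspose, Matrix.mul_assoc]
    rw [← Matrix.mul_assoc W Wᴴ, hWWs, Matrix.one_mul, ← Matrix.mul_assoc U Uᴴ, hUUs,
      Matrix.one_mul, hWsW]
  -- trace 1
  have hT1 : Matrix.trace (exp ((-β : ℂ) • H) * H) = ∑ i, ((a i : ℂ) * (b i : ℂ)) := by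
    rw [hexp]
    conv_lhs => rw [hspec]
    have key : W * Matrix.diagonal (fun i => (a i : ℂ)) * Wᴴ *
        (W * Matrix.diagonal (fun i => (b i : ℂ)) * Wᴴ)
        = W * (Matrix.diagonal (fun i => (a i : ℂ)) * Matrix.diagonal (fun i => (b i : ℂ))) * Wᴴ := by
      simp only [Matrix.mul_assoc]
      rw [← Matrix.mul_assoc Wᴴ W, hWsW, Matrix.one_mul]
    rw [key, Matrix.trace_mul_cycle, ← Matrix.mul_assoc, hWsW, Matrix.one_mul,
      Matrix.diagonal_mul_diagonal, Matrix.trace_diagonal]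
  -- trace 2
  have hT2 : Matrix.trace (exp ((-β : ℂ) • H) * (Uᴴ * H * U))
      = ∑ i, ∑ j, (a i : ℂ) * ((starRingEnd ℂ) (V j i) * (b j : ℂ) * V j i) := by
    rw [hexp]
    conv_lhs => rw [hspec]
    have key : W * Matrix.diagonal (fun i => (a i : ℂ)) * Wᴴ *
        (Uᴴ * (W * Matrix.diagonal (fun i => (b i : ℂ)) * Wᴴ) * U)
        = W * (Matrix.diagonal (fun i => (a i : ℂ)) *
          (Vᴴ * Matrix.diagonal (fun i => (b i : ℂ)) * V)) * Wᴴ := by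
      rw [hVdef]
      simp only [Matrix.conjTranspose_mul, Matrix.conjTranspose_conjTranspose,
        Matrix.mul_assoc, hWWs, Matrix.mul_one]
    rw [key, Matrix.trace_mul_cycle, ← Matrix.mul_assoc, hWsW, Matrix.one_mul,
      trace_diag_conj]
  -- double stochasticity of p i j = |V j i|²
  set p : Fin n → Fin n → ℝ := fun i j => Complex.normSq (V j i) with hpdef
  have hp : ∀ i j, 0 ≤ p i j := fun i j => Complex.normSq_nonneg _
  have hrow : ∀ i, ∑ j, p i j = 1 := by
    intro i
    have := congrArg (fun M => M i i) hVsV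
    simp only [Matrix.mul_apply, Matrix.one_apply_eq, Matrix.conjTranspose_apply] at this
    have h2 : ∀ j, star (V j i) * V j i = ((Complex.normSq (V j i) : ℝ) : ℂ) := by
      intro j
      rw [Complex.normSq_eq_conj_mul_self]
      rfl
    rw [Finset.sum_congr rfl (fun j _ => h2 j)] at this
    have := congrArg Complex.re this
    simpa [Complex.ofReal_re] using this
  have hcol : ∀ j, ∑ i, p i j = 1 := by
    intro j
    have := congrArg (fun M => M j j) hVVs
    simp only [Matrix.mul_apply, Matrix.one_apply_eq, Matrix.conjTranspose_apply] at this
    have h2 : ∀ i, V j i * star (V j i) = ((Complex.normSq (V j i) : ℝ) : ℂ) := by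
      intro i
      rw [mul_comm, Complex.normSq_eq_conj_mul_self]
      rfl
    rw [Finset.sum_congr rfl (fun i _ => h2 i)] at this
    have := congrArg Complex.re this
    simpa [Complex.ofReal_re] using this
  -- real parts
  have hre1 : (Matrix.trace (exp ((-β : ℂ) • H) * H)).re = ∑ i, a i * b i := by
    rw [hT1]
    rw [Complex.re_sum]
    refine Finset.sum_congr rfl fun i _ => ?_
    rw [← Complex.ofReal_mul, Complex.ofReal_re]
  have hre2 : (Matrix.trace (exp ((-β : ℂ) • H) * (Uᴴ * H * U))).re
      = ∑ i, ∑ j, p i j * (a i * b j) := by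
    rw [hT2, Complex.re_sum]
    refine Finset.sum_congr rfl fun i _ => ?_
    rw [Complex.re_sum]
    refine Finset.sum_congr rfl fun j _ => ?_
    have : (a i : ℂ) * ((starRingEnd ℂ) (V j i) * (b j : ℂ) * V j i)
        = ((p i j * (a i * b j) : ℝ) : ℂ) := by
      rw [hpdef]
      have : (starRingEnd ℂ) (V j i) * (b j : ℂ) * V j i
          = ((Complex.normSq (V j i) : ℝ) : ℂ) * (b j : ℂ) := by
        rw [mul_comm ((starRingEnd ℂ) (V j i)) ((b j : ℂ)), mul_assoc,
          ← Complex.normSq_eq_conj_mul_self]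
        ring
      rw [this]
      push_cast
      ring
    rw [this, Complex.ofReal_re]
  rw [hre1, hre2]
  have := gibbs_key b β hβ p hp hrow hcol
  simpa [hadef] using this
end

section
/- Abstract form of Bloch's theorem for equilibrium states: let H and J be n×n Hermitian complex matrices, let β ≥ 0, and let c > 0 and ε ≥ 0 be real numbers. Suppose there exist unitary n×n matrices U₊ and U₋ such that ‖U₊* H U₊ − H − c·J‖ ≤ ε and ‖U₋* H U₋ − H + c·J‖ ≤ ε. Then the Gibbs expectation of the current satisfies |Tr(J·exp(−βH))/Tr(exp(−βH))| ≤ ε/c. -/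
set_option maxHeartbeats 1000000

namespace BlochAux

/-- Exponential of a conjugated real diagonal matrix (stated without the `L2OpNorm`
scope so that the default (Pi) topology instances are used; the instances are defeq). -/
lemma exp_conj_real {n : ℕ} (V : Matrix (Fin n) (Fin n) ℂ) (hV : IsUnit V) (v : Fin n → ℝ) :
    NormedSpace.exp (V * Matrix.diagonal (fun i => ((v i : ℝ) : ℂ)) * V⁻¹)
      = V * Matrix.diagonal (fun i => ((Real.exp (v i) : ℝ) : ℂ)) * V⁻¹ := by
  rw [Matrix.exp_conj _ _ hV, Matrix.exp_diagonal]
  have h : NormedSpace.exp (fun i => ((v i : ℝ) : ℂ)) = fun i => ((Real.exp (v i) : ℝ) : ℂ) := by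
    funext i
    rw [Pi.coe_exp, ← Complex.exp_eq_exp_ℂ, ← Complex.ofReal_exp]
  rw [h]

end BlochAux

open scoped Matrix Matrix.Norms.L2Operator
open NormedSpace -- for `exp`

namespace BlochAux

open Finset

lemma sum_B_right {n : ℕ} (B : Fin n → Fin n → ℝ)
    (hcol : ∀ j, ∑ i, B i j = 1) (g : Fin n → ℝ) :
    ∑ j, ∑ i, B i j * g j = ∑ j, g j := by
  refine Finset.sum_congr rfl fun j _ => ?_
  rw [← Finset.sum_mul, hcol j, one_mul]

lemma sum_B_left {n : ℕ} (B : Fin n → Fin n → ℝ)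
    (hrow : ∀ i, ∑ j, B i j = 1) (g : Fin n → ℝ) :
    ∑ j, ∑ i, B i j * g i = ∑ i, g i := by
  rw [Finset.sum_comm]
  refine Finset.sum_congr rfl fun i _ => ?_
  rw [← Finset.sum_mul, hrow i, one_mul]

lemma passivity_sum {n : ℕ} (lam : Fin n → ℝ) (β : ℝ) (hβ : 0 ≤ β)
    (B : Fin n → Fin n → ℝ) (hB : ∀ i j, 0 ≤ B i j)
    (hrow : ∀ i, ∑ j, B i j = 1) (hcol : ∀ j, ∑ i, B i j = 1) :
    0 ≤ ∑ j, ∑ i, B i j * (lam i - lam j) * Real.exp (-β * lam j) := by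
  set d : Fin n → ℝ := fun j => Real.exp (-β * lam j) with hd
  rcases eq_or_lt_of_le hβ with h0 | hpos
  · have hd1 : ∀ j, d j = 1 := by intro j; simp [hd, ← h0]
    have : ∑ j, ∑ i, B i j * (lam i - lam j) * d j
        = (∑ j, ∑ i, B i j * lam i) - ∑ j, ∑ i, B i j * lam j := by
      rw [← Finset.sum_sub_distrib]
      refine Finset.sum_congr rfl fun j _ => ?_
      rw [← Finset.sum_sub_distrib]
      refine Finset.sum_congr rfl fun i _ => ?_
      rw [hd1 j]; ring
    rw [this, sum_B_left B hrow, sum_B_right B hcol]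
    simp
  · have hzero : ∑ j, ∑ i, B i j * (d j - d i) = 0 := by
      have : ∑ j, ∑ i, B i j * (d j - d i)
          = (∑ j, ∑ i, B i j * d j) - ∑ j, ∑ i, B i j * d i := by
        rw [← Finset.sum_sub_distrib]
        refine Finset.sum_congr rfl fun j _ => ?_
        rw [← Finset.sum_sub_distrib]
        exact Finset.sum_congr rfl fun i _ => by ring
      rw [this, sum_B_right B hcol, sum_B_left B hrow, sub_self]
    have hpt : ∀ i j, B i j * (d j - d i) ≤ β * (B i j * (lam i - lam j) * d j) := by
      intro i j
      have he : d i = d j * Real.exp (β * (lam j - lam i)) := by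
        rw [hd, ← Real.exp_add]; ring_nf
      have h1 : β * (lam j - lam i) + 1 ≤ Real.exp (β * (lam j - lam i)) :=
        Real.add_one_le_exp _
      have hdj : (0:ℝ) < d j := Real.exp_pos _
      nlinarith [hB i j, mul_le_mul_of_nonneg_left h1 (le_of_lt hdj)]
    have hsum : 0 ≤ β * ∑ j, ∑ i, B i j * (lam i - lam j) * d j := by
      calc (0:ℝ) = ∑ j, ∑ i, B i j * (d j - d i) := hzero.symm
        _ ≤ ∑ j, ∑ i, β * (B i j * (lam i - lam j) * d j) :=
            Finset.sum_le_sum fun j _ => Finset.sum_le_sum fun i _ => hpt i j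
        _ = β * ∑ j, ∑ i, B i j * (lam i - lam j) * d j := by
            rw [Finset.mul_sum]
            exact Finset.sum_congr rfl fun j _ => (Finset.mul_sum _ _ _).symm
    exact nonneg_of_mul_nonneg_right hsum hpos

lemma abs_conj_diag_le_norm {n : ℕ} (A V : Matrix (Fin n) (Fin n) ℂ)
    (hV : Vᴴ * V = 1) (j : Fin n) :
    ‖(Vᴴ * A * V) j j‖ ≤ ‖A‖ := by
  classical
  set col : Fin n → ℂ := fun i => V i j with hcol
  set v : EuclideanSpace ℂ (Fin n) := (WithLp.equiv 2 _).symm col with hvdef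
  set w : EuclideanSpace ℂ (Fin n) := (WithLp.equiv 2 _).symm (A *ᵥ col) with hwdef
  have hsum1 : ∑ i, (starRingEnd ℂ) (col i) * col i = 1 := by
    have h := congrFun (congrFun hV j) j
    simpa [Matrix.mul_apply, Matrix.conjTranspose_apply, Matrix.one_apply, hcol] using h
  have hv : ‖v‖ = 1 := by
    have h2 : ∑ i, ‖col i‖ ^ 2 = 1 := by
      have h := congrArg Complex.re hsum1
      rw [Complex.re_sum, Complex.one_re] at h
      rw [← h]
      refine Finset.sum_congr rfl fun i _ => ?_
      rw [Complex.sq_norm, ← Complex.normSq_eq_conj_mul_self]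
      simp [Complex.normSq]
    rw [EuclideanSpace.norm_eq]
    have : ∀ i, ‖v i‖ = ‖col i‖ := fun i => rfl
    simp only [this, h2, Real.sqrt_one]
  have hentry : (Vᴴ * A * V) j j = (inner ℂ v w : ℂ) := by
    rw [show (inner ℂ v w : ℂ) = dotProduct (star col) (A *ᵥ col) from by rw [dotProduct_comm]; rfl]
    simp only [Matrix.mul_apply, Matrix.conjTranspose_apply, dotProduct,
      Matrix.mulVec, Pi.star_apply, hcol, Finset.sum_mul, Finset.mul_sum]
    rw [Finset.sum_comm]
    refine Finset.sum_congr rfl fun k _ => Finset.sum_congr rfl fun l _ => by ring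
  have hw : ‖w‖ ≤ ‖A‖ * ‖v‖ := Matrix.l2_opNorm_mulVec A v
  calc ‖(Vᴴ * A * V) j j‖ = ‖(inner ℂ v w : ℂ)‖ := by
        rw [hentry]
    _ ≤ ‖v‖ * ‖w‖ := norm_inner_le_norm v w
    _ ≤ ‖v‖ * (‖A‖ * ‖v‖) := mul_le_mul_of_nonneg_left hw (norm_nonneg _)
    _ = ‖A‖ := by rw [hv]; ring

lemma trace_mul_conj_diag {n : ℕ} (M V : Matrix (Fin n) (Fin n) ℂ) (dc : Fin n → ℂ) :
    Matrix.trace (M * (V * Matrix.diagonal dc * Vᴴ)) = ∑ j, (Vᴴ * M * V) j j * dc j := by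
  have h1 : M * (V * Matrix.diagonal dc * Vᴴ) = M * V * Matrix.diagonal dc * Vᴴ := by
    simp [mul_assoc]
  rw [h1, Matrix.trace_mul_comm]
  have h2 : Vᴴ * (M * V * Matrix.diagonal dc) = Vᴴ * M * V * Matrix.diagonal dc := by
    simp [mul_assoc]
  rw [h2]
  simp [Matrix.trace, Matrix.diag, Matrix.mul_diagonal]

end BlochAux

/-- **Abstract Bloch's theorem for equilibrium (Gibbs) states.**
If `H`, `J` are Hermitian, `β ≥ 0`, `c > 0`, `ε ≥ 0`, and there are unitaries
`U₊`, `U₋` with `‖U₊* H U₊ - H - c J‖ ≤ ε` and `‖U₋* H U₋ - H + c J‖ ≤ ε`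
(operator norm), then the Gibbs expectation of the current satisfies
`|Tr(J exp(-βH)) / Tr(exp(-βH))| ≤ ε / c`. -/
theorem bloch_theorem_gibbs_state {n : ℕ}
    (H J : Matrix (Fin n) (Fin n) ℂ) (hH : H.IsHermitian) (hJ : J.IsHermitian)
    (β : ℝ) (hβ : 0 ≤ β)
    (c ε : ℝ) (hc : 0 < c) (hε : 0 ≤ ε)
    (Uplus Uminus : Matrix (Fin n) (Fin n) ℂ)
    (hUplus : Uplus ∈ Matrix.unitaryGroup (Fin n) ℂ)
    (hUminus : Uminus ∈ Matrix.unitaryGroup (Fin n) ℂ)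
    (hplus : ‖Uplusᴴ * H * Uplus - H - (c : ℂ) • J‖ ≤ ε)
    (hminus : ‖Uminusᴴ * H * Uminus - H + (c : ℂ) • J‖ ≤ ε) :
    ‖Matrix.trace (J * exp ((-β : ℂ) • H)) /
      Matrix.trace (exp ((-β : ℂ) • H))‖ ≤ ε / c := by
  classical
  rcases Nat.eq_zero_or_pos n with hn | hn
  · subst hn
    simp [Matrix.trace]
    positivity
  set V : Matrix (Fin n) (Fin n) ℂ := (hH.eigenvectorUnitary : Matrix (Fin n) (Fin n) ℂ)
    with hVdef
  have hVmem : V ∈ Matrix.unitaryGroup (Fin n) ℂ := hH.eigenvectorUnitary.2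
  have hV1 : Vᴴ * V = 1 := by
    have := (Matrix.mem_unitaryGroup_iff').mp hVmem
    simpa [Matrix.star_eq_conjTranspose] using this
  have hV2 : V * Vᴴ = 1 := by
    have := (Matrix.mem_unitaryGroup_iff).mp hVmem
    simpa [Matrix.star_eq_conjTranspose] using this
  set lam : Fin n → ℝ := hH.eigenvalues with hlam
  set lamc : Fin n → ℂ := fun i => (lam i : ℂ) with hlamc
  have hdiag : Vᴴ * H * V = Matrix.diagonal lamc := by
    have := hH.conjStarAlgAut_star_eigenvectorUnitary
    simpa [Matrix.star_eq_conjTranspose, Function.comp_def, hVdef, hlamc, hlam] using this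
  have hspec : H = V * Matrix.diagonal lamc * Vᴴ := by
    have := hH.spectral_theorem
    simpa [Matrix.star_eq_conjTranspose, Function.comp_def, hVdef, hlamc, hlam] using this
  set d : Fin n → ℝ := fun j => Real.exp (-β * lam j) with hd
  have hdpos : ∀ j, 0 < d j := fun j => Real.exp_pos _
  set Z : ℝ := ∑ j, d j with hZ
  have hZpos : 0 < Z := Finset.sum_pos (fun j _ => hdpos j) ⟨⟨0, hn⟩, Finset.mem_univ _⟩
  -- the exponential
  have hinv : V⁻¹ = Vᴴ := Matrix.inv_eq_left_inv hV1
  have hVunit : IsUnit V := ⟨⟨V, Vᴴ, by exact hV2, by exact hV1⟩, rfl⟩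
  have hexp : exp ((-β : ℂ) • H) = V * Matrix.diagonal (fun j => (d j : ℂ)) * Vᴴ := by
    have hfun : (fun i => ((-β * lam i : ℝ) : ℂ)) = (-β : ℂ) • lamc := by
      funext i
      rw [Pi.smul_apply, hlamc, smul_eq_mul]
      push_cast
      ring
    have h1 : (-β : ℂ) • H = V * Matrix.diagonal (fun i => ((-β * lam i : ℝ) : ℂ)) * Vᴴ := by
      conv_lhs => rw [hspec]
      rw [hfun, Matrix.diagonal_smul, Matrix.mul_smul, Matrix.smul_mul]
    rw [h1, ← hinv]
    exact BlochAux.exp_conj_real V hVunit (fun j => -β * lam j)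
  -- trace of the Gibbs weight
  have htrZ : Matrix.trace (exp ((-β : ℂ) • H)) = (Z : ℂ) := by
    rw [hexp, Matrix.trace_mul_comm, ← mul_assoc, hV1, one_mul, Matrix.trace_diagonal]
    rw [hZ]
    push_cast
    rfl
  -- the real functional f
  set f : Matrix (Fin n) (Fin n) ℂ → ℝ := fun M => ∑ j, ((Vᴴ * M * V) j j).re * d j
    with hf
  -- trace of J * ρ
  have htrJ : Matrix.trace (J * exp ((-β : ℂ) • H)) = ((f J : ℝ) : ℂ) := by
    rw [hexp, BlochAux.trace_mul_conj_diag]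
    have hherm : (Vᴴ * J * V).IsHermitian := Matrix.isHermitian_conjTranspose_mul_mul V hJ
    simp only [hf]
    rw [Complex.ofReal_sum]
    refine Finset.sum_congr rfl fun j _ => ?_
    have hreal : ((Vᴴ * J * V) j j).im = 0 := by
      have := congrFun (congrFun hherm.symm j) j
      rw [Matrix.conjTranspose_apply] at this
      have him := congrArg Complex.im this
      simp at him
      linarith
    rw [Complex.ofReal_mul]
    congr 1
    exact (Complex.ext (by simp) (by simp [hreal])).symm
  -- passivity
  have passivity : ∀ U : Matrix (Fin n) (Fin n) ℂ, U ∈ Matrix.unitaryGroup (Fin n) ℂ →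
      f H ≤ f (Uᴴ * H * U) := by
    intro U hU
    have hU1 : Uᴴ * U = 1 := by
      have := (Matrix.mem_unitaryGroup_iff').mp hU
      simpa [Matrix.star_eq_conjTranspose] using this
    have hU2 : U * Uᴴ = 1 := by
      have := (Matrix.mem_unitaryGroup_iff).mp hU
      simpa [Matrix.star_eq_conjTranspose] using this
    set W : Matrix (Fin n) (Fin n) ℂ := Vᴴ * U * V with hWdef
    have hWH : Wᴴ = Vᴴ * Uᴴ * V := by
      rw [hWdef]
      simp [Matrix.conjTranspose_mul, mul_assoc]
    have hW1 : Wᴴ * W = 1 := by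
      rw [hWH, hWdef]
      calc Vᴴ * Uᴴ * V * (Vᴴ * U * V) = Vᴴ * Uᴴ * (V * Vᴴ) * U * V := by
            simp only [mul_assoc]
        _ = 1 := by rw [hV2, mul_one, mul_assoc, mul_assoc, ← mul_assoc Uᴴ, hU1, one_mul, hV1]
    have hW2 : W * Wᴴ = 1 := by
      rw [hWH, hWdef]
      calc Vᴴ * U * V * (Vᴴ * Uᴴ * V) = Vᴴ * U * (V * Vᴴ) * Uᴴ * V := by
            simp only [mul_assoc]
        _ = 1 := by rw [hV2, mul_one, mul_assoc, mul_assoc, ← mul_assoc U, hU2, one_mul, hV1]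
    set B : Fin n → Fin n → ℝ := fun i j => Complex.normSq (W i j) with hB
    have hBnn : ∀ i j, 0 ≤ B i j := fun i j => Complex.normSq_nonneg _
    have hcolB : ∀ j, ∑ i, B i j = 1 := by
      intro j
      have h := congrFun (congrFun hW1 j) j
      rw [Matrix.mul_apply, Matrix.one_apply_eq] at h
      have := congrArg Complex.re h
      rw [Complex.re_sum, Complex.one_re] at this
      rw [← this]
      refine Finset.sum_congr rfl fun i _ => ?_
      rw [Matrix.conjTranspose_apply, hB]
      simp [Complex.normSq_apply, Complex.mul_re]
    have hrowB : ∀ i, ∑ j, B i j = 1 := by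
      intro i
      have h := congrFun (congrFun hW2 i) i
      rw [Matrix.mul_apply, Matrix.one_apply_eq] at h
      have := congrArg Complex.re h
      rw [Complex.re_sum, Complex.one_re] at this
      rw [← this]
      refine Finset.sum_congr rfl fun j _ => ?_
      rw [Matrix.conjTranspose_apply, hB]
      simp [Complex.normSq_apply, Complex.mul_re, mul_comm]
    have hkey : Vᴴ * (Uᴴ * H * U) * V = Wᴴ * Matrix.diagonal lamc * W := by
      rw [hWH, hWdef]
      conv_lhs => rw [hspec]
      simp only [mul_assoc]
    have hfU : f (Uᴴ * H * U) = ∑ j, ∑ i, lam i * B i j * d j := by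
      simp only [hf]
      refine Finset.sum_congr rfl fun j _ => ?_
      rw [hkey]
      have hentry : (Wᴴ * Matrix.diagonal lamc * W) j j
          = ∑ i, (starRingEnd ℂ) (W i j) * (lamc i * W i j) := by
        rw [mul_assoc, Matrix.mul_apply]
        refine Finset.sum_congr rfl fun i _ => ?_
        rw [Matrix.conjTranspose_apply, Matrix.diagonal_mul]
        rfl
      rw [hentry, Complex.re_sum, Finset.sum_mul]
      refine Finset.sum_congr rfl fun i _ => ?_
      have : (starRingEnd ℂ) (W i j) * (lamc i * W i j)
          = (lamc i) * ((starRingEnd ℂ) (W i j) * W i j) := by ring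
      rw [this, ← Complex.normSq_eq_conj_mul_self, hlamc]
      rw [show ((lam i : ℂ) * (Complex.normSq (W i j) : ℂ)).re
          = lam i * Complex.normSq (W i j) by
        rw [← Complex.ofReal_mul]; exact Complex.ofReal_re _]
    have hfH : f H = ∑ j, lam j * d j := by
      simp only [hf]
      refine Finset.sum_congr rfl fun j _ => ?_
      rw [hdiag, Matrix.diagonal_apply_eq, hlamc, Complex.ofReal_re]
    rw [hfU, hfH]
    have hps := BlochAux.passivity_sum lam β hβ B hBnn hrowB hcolB
    have hexpand : ∑ j, ∑ i, B i j * (lam i - lam j) * Real.exp (-β * lam j)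
        = (∑ j, ∑ i, lam i * B i j * d j) - ∑ j, lam j * d j := by
      have h1 : ∀ j, ∑ i, B i j * (lam i - lam j) * Real.exp (-β * lam j)
          = (∑ i, lam i * B i j * d j) - lam j * d j := by
        intro j
        have : ∑ i, B i j * (lam i - lam j) * Real.exp (-β * lam j)
            = (∑ i, lam i * B i j * d j) - (∑ i, B i j) * (lam j * d j) := by
          rw [Finset.sum_mul, ← Finset.sum_sub_distrib]
          refine Finset.sum_congr rfl fun i _ => ?_
          rw [hd]; ring
        rw [this, hcolB j, one_mul]
      rw [← Finset.sum_sub_distrib]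
      exact Finset.sum_congr rfl fun j _ => h1 j
    rw [hexpand] at hps
    linarith
  -- linearity of f
  have hf_add : ∀ A B : Matrix (Fin n) (Fin n) ℂ, f (A + B) = f A + f B := by
    intro A B
    simp only [hf]
    rw [← Finset.sum_add_distrib]
    refine Finset.sum_congr rfl fun j _ => ?_
    simp [Matrix.mul_add, Matrix.add_mul, Matrix.add_apply]
    ring
  have hf_smul : ∀ A : Matrix (Fin n) (Fin n) ℂ, f ((c : ℂ) • A) = c * f A := by
    intro A
    simp only [hf]
    rw [Finset.mul_sum]
    refine Finset.sum_congr rfl fun j _ => ?_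
    rw [Matrix.mul_smul, Matrix.smul_mul, Matrix.smul_apply]
    rw [show ((c : ℂ) • ((Vᴴ * A * V) j j)).re = c * ((Vᴴ * A * V) j j).re by
      simp [Complex.smul_re]]
    ring
  -- bound on f of small perturbations
  have hf_bound : ∀ K : Matrix (Fin n) (Fin n) ℂ, ‖K‖ ≤ ε → |f K| ≤ ε * Z := by
    intro K hK
    simp only [hf]
    calc |∑ j, ((Vᴴ * K * V) j j).re * d j| ≤ ∑ j, |((Vᴴ * K * V) j j).re * d j| :=
          Finset.abs_sum_le_sum_abs _ _
      _ ≤ ∑ j, ε * d j := by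
          refine Finset.sum_le_sum fun j _ => ?_
          rw [abs_mul, abs_of_pos (hdpos j)]
          refine mul_le_mul_of_nonneg_right ?_ (hdpos j).le
          calc |((Vᴴ * K * V) j j).re| ≤ ‖(Vᴴ * K * V) j j‖ :=
                Complex.abs_re_le_norm _
            _ ≤ ‖K‖ := BlochAux.abs_conj_diag_le_norm K V hV1 j
            _ ≤ ε := hK
      _ = ε * Z := by rw [hZ, Finset.mul_sum]
  -- combine
  set Kp : Matrix (Fin n) (Fin n) ℂ := Uplusᴴ * H * Uplus - H - (c : ℂ) • J with hKp
  set Km : Matrix (Fin n) (Fin n) ℂ := Uminusᴴ * H * Uminus - H + (c : ℂ) • J with hKm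
  have hUp : Uplusᴴ * H * Uplus = H + (c : ℂ) • J + Kp := by rw [hKp]; abel
  have hUm : Uminusᴴ * H * Uminus = H + (-(c : ℂ)) • J + Km := by
    rw [hKm]; simp [neg_smul]; abel
  have hlow : -(ε * Z) ≤ c * f J := by
    have h1 := passivity Uplus hUplus
    rw [hUp, hf_add, hf_add, hf_smul] at h1
    have h2 := hf_bound Kp hplus
    have := abs_le.mp h2
    linarith [this.1, this.2]
  have hhigh : c * f J ≤ ε * Z := by
    have h1 := passivity Uminus hUminus
    have hsm : f ((-(c : ℂ)) • J) = -(c * f J) := by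
      rw [show (-(c : ℂ)) • J = ((c:ℂ)) • (-J) by simp [neg_smul, smul_neg]]
      rw [hf_smul]
      rw [show f (-J) = -f J by
        simp only [hf]
        rw [← Finset.sum_neg_distrib]
        refine Finset.sum_congr rfl fun j _ => ?_
        simp [Matrix.mul_neg, Matrix.neg_mul, Matrix.neg_apply]]
      ring
    rw [hUm, hf_add, hf_add, hsm] at h1
    have h2 := hf_bound Km hminus
    have := abs_le.mp h2
    linarith [this.1, this.2]
  -- final computation
  rw [htrJ, htrZ]
  rw [show ((f J : ℝ) : ℂ) / ((Z : ℝ) : ℂ) = (((f J / Z : ℝ)) : ℂ) by push_cast; ring]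
  rw [Complex.norm_real, Real.norm_eq_abs, abs_div, abs_of_pos hZpos]
  rw [div_le_div_iff₀ hZpos hc]
  have habs : |f J| * c = |c * f J| := by
    rw [abs_mul, abs_of_pos hc]; ring
  rw [habs]
  rw [abs_le]
  constructor <;> nlinarith
end

section
/- Bound on the Duhamel two-point function: let H be an n×n Hermitian complex matrix, β ≥ 0 a real number, and O₁, O₂ arbitrary n×n complex matrices. Then |∫₀¹ Tr(O₁ · exp(−zβH) · O₂ · exp(−(1−z)βH)) dz| ≤ ‖O₁‖ · ‖O₂‖ · Tr(exp(−βH)). In particular, the normalized Duhamel two-point function (O₁, O₂) = (1/Tr(exp(−βH))) ∫₀¹ Tr(O₁ e^{−zβH} O₂ e^{−(1−z)βH}) dz satisfies |(O₁, O₂)| ≤ ‖O₁‖·‖O₂‖. -/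
open scoped Matrix Matrix.Norms.L2Operator
open NormedSpace -- for `exp`

section Aux

set_option maxHeartbeats 800000 in
theorem exp_real_smul_herm {n : ℕ} (H : Matrix (Fin n) (Fin n) ℂ) (hH : H.IsHermitian) (t : ℝ) :
    exp ((t:ℂ) • H) = (hH.eigenvectorUnitary : Matrix (Fin n) (Fin n) ℂ) *
      Matrix.diagonal (fun i => (Real.exp (t * hH.eigenvalues i) : ℂ)) *
      star (hH.eigenvectorUnitary : Matrix (Fin n) (Fin n) ℂ) := by
  have hU : IsUnit (hH.eigenvectorUnitary : Matrix (Fin n) (Fin n) ℂ) :=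
    ⟨⟨_, star (hH.eigenvectorUnitary : Matrix (Fin n) (Fin n) ℂ),
      Unitary.coe_mul_star_self _, Unitary.coe_star_mul_self _⟩, rfl⟩
  have hinv : (hH.eigenvectorUnitary : Matrix (Fin n) (Fin n) ℂ)⁻¹ =
      star (hH.eigenvectorUnitary : Matrix (Fin n) (Fin n) ℂ) :=
    Matrix.inv_eq_left_inv (Unitary.coe_star_mul_self _)
  conv_lhs => rw [hH.spectral_theorem, Unitary.conjStarAlgAut_apply]
  rw [← hinv]
  rw [show (t:ℂ) • ((hH.eigenvectorUnitary : Matrix (Fin n) (Fin n) ℂ) *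
      Matrix.diagonal (RCLike.ofReal ∘ hH.eigenvalues) *
      (hH.eigenvectorUnitary : Matrix (Fin n) (Fin n) ℂ)⁻¹) =
      (hH.eigenvectorUnitary : Matrix (Fin n) (Fin n) ℂ) *
      ((t:ℂ) • Matrix.diagonal (RCLike.ofReal ∘ hH.eigenvalues)) *
      (hH.eigenvectorUnitary : Matrix (Fin n) (Fin n) ℂ)⁻¹ by
    rw [Matrix.mul_smul, Matrix.smul_mul]]
  rw [Matrix.exp_conj _ _ hU, hinv]
  congr 2
  rw [← Matrix.diagonal_smul, Matrix.exp_diagonal]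
  congr 1
  funext i
  rw [Pi.exp_def]
  simp only [Pi.smul_apply, Function.comp_apply, smul_eq_mul]
  push_cast
  rw [← Complex.exp_eq_exp_ℂ]
  rfl

theorem col_sq_le {n : ℕ} (N : Matrix (Fin n) (Fin n) ℂ) (i : Fin n) :
    ∑ j, ‖N j i‖^2 ≤ ‖N‖^2 := by
  have h := N.l2_opNorm_mulVec (EuclideanSpace.single i (1:ℂ))
  rw [EuclideanSpace.norm_single, norm_one, mul_one] at h
  have h2 : ‖(EuclideanSpace.equiv (Fin n) ℂ).symm (N *ᵥ (EuclideanSpace.single i (1:ℂ)))‖^2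
      = ∑ j, ‖N j i‖^2 := by
    rw [EuclideanSpace.norm_eq]
    rw [Real.sq_sqrt (by positivity)]
    congr 1
    funext j
    congr 2
    show (N *ᵥ (EuclideanSpace.single i (1:ℂ))) j = N j i
    have : ((EuclideanSpace.single i (1:ℂ)) : Fin n → ℂ) = Pi.single i 1 := by
      funext k
      simp [EuclideanSpace.single_apply, Pi.single_apply]
    rw [this, Matrix.mulVec_single]; simp
  calc ∑ j, ‖N j i‖^2 = _ := h2.symm
    _ ≤ ‖N‖^2 := by
      have h0 : (0:ℝ) ≤ ‖(EuclideanSpace.equiv (Fin n) ℂ).symm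
          (N *ᵥ (EuclideanSpace.single i (1:ℂ)))‖ := norm_nonneg _
      nlinarith [norm_nonneg N]

theorem row_sq_le {n : ℕ} (M : Matrix (Fin n) (Fin n) ℂ) (i : Fin n) :
    ∑ j, ‖M i j‖^2 ≤ ‖M‖^2 := by
  have := col_sq_le Mᴴ i
  rw [Matrix.l2_opNorm_conjTranspose] at this
  simpa [Matrix.conjTranspose_apply] using this

theorem row_col_pair_le {n : ℕ} (M N : Matrix (Fin n) (Fin n) ℂ) (i : Fin n) :
    ∑ j, ‖M i j‖ * ‖N j i‖ ≤ ‖M‖ * ‖N‖ := by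
  have hcs := Finset.sum_mul_sq_le_sq_mul_sq Finset.univ
    (fun j => ‖M i j‖) (fun j => ‖N j i‖)
  have h1 := row_sq_le M i
  have h2 := col_sq_le N i
  have hs : (0:ℝ) ≤ ∑ j, ‖M i j‖ * ‖N j i‖ := by positivity
  have hMN : (0:ℝ) ≤ ‖M‖ * ‖N‖ := by positivity
  have hsum1 : (0:ℝ) ≤ ∑ j, ‖M i j‖^2 := by positivity
  have hsum2 : (0:ℝ) ≤ ∑ j, ‖N j i‖^2 := by positivity
  nlinarith [norm_nonneg M, norm_nonneg N,
    mul_le_mul h1 h2 hsum2 (by positivity : (0:ℝ) ≤ ‖M‖^2)]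

theorem trace_entry {n : ℕ} (P Q : Matrix (Fin n) (Fin n) ℂ) (d₁ d₂ : Fin n → ℂ) :
    Matrix.trace (P * Matrix.diagonal d₁ * Q * Matrix.diagonal d₂) =
      ∑ i, ∑ j, P i j * d₁ j * Q j i * d₂ i := by
  simp [Matrix.trace, Matrix.diag, Matrix.mul_apply, Matrix.diagonal_apply,
    Finset.sum_mul, Finset.mul_sum, mul_ite, ite_mul]

theorem trace_conj_id {n : ℕ} (U sU O₁ O₂ D₁ D₂ : Matrix (Fin n) (Fin n) ℂ)
    (h1 : U * sU = 1) (h2 : sU * U = 1) :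
    Matrix.trace (O₁ * (U * D₁ * sU) * O₂ * (U * D₂ * sU)) =
      Matrix.trace ((sU * O₁ * U) * D₁ * (sU * O₂ * U) * D₂) := by
  have key : O₁ * (U * D₁ * sU) * O₂ * (U * D₂ * sU) =
      U * ((sU * O₁ * U) * D₁ * (sU * O₂ * U) * D₂) * sU := by
    simp only [← mul_assoc]
    rw [h1, one_mul]
  rw [key, Matrix.trace_mul_cycle, ← mul_assoc, h2, one_mul]

set_option maxHeartbeats 1600000 in
/-- The pointwise bound on the integrand. -/
theorem duhamel_pointwise {n : ℕ} (H : Matrix (Fin n) (Fin n) ℂ) (hH : H.IsHermitian)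
    (β : ℝ) (hβ : 0 ≤ β) (O₁ O₂ : Matrix (Fin n) (Fin n) ℂ)
    (z : ℝ) (hz0 : 0 ≤ z) (hz1 : z ≤ 1) :
    ‖Matrix.trace (O₁ * exp ((-(z : ℂ) * β) • H) * O₂ *
        exp ((-(1 - (z : ℂ)) * β) • H))‖ ≤
      ‖O₁‖ * ‖O₂‖ * ∑ i, Real.exp (-β * hH.eigenvalues i) := by
  rcases Nat.eq_zero_or_pos n with hn | hn
  · subst hn
    simp [Matrix.trace]
  haveI : Nontrivial (Matrix (Fin n) (Fin n) ℂ) := by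
    refine ⟨0, 1, fun h => ?_⟩
    have := congr_fun (congr_fun h ⟨0, hn⟩) ⟨0, hn⟩
    simp [Matrix.one_apply] at this
  -- notation
  set U : Matrix (Fin n) (Fin n) ℂ := (hH.eigenvectorUnitary : Matrix (Fin n) (Fin n) ℂ) with hUdef
  have h1 : U * star U = 1 := Unitary.coe_mul_star_self _
  have h2 : star U * U = 1 := Unitary.coe_star_mul_self _
  have hUnorm : ‖U‖ = 1 := CStarRing.norm_coe_unitary hH.eigenvectorUnitary
  have hsUnorm : ‖star U‖ = 1 := by
    rw [Matrix.star_eq_conjTranspose, Matrix.l2_opNorm_conjTranspose, hUnorm]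
  set lam := hH.eigenvalues with hlam
  set P : Matrix (Fin n) (Fin n) ℂ := star U * O₁ * U with hPdef
  set Q : Matrix (Fin n) (Fin n) ℂ := star U * O₂ * U with hQdef
  have hP : ‖P‖ ≤ ‖O₁‖ := by
    calc ‖star U * O₁ * U‖ ≤ ‖star U * O₁‖ * ‖U‖ := Matrix.l2_opNorm_mul _ _
      _ ≤ ‖star U‖ * ‖O₁‖ * ‖U‖ :=
        mul_le_mul_of_nonneg_right (Matrix.l2_opNorm_mul _ _) (norm_nonneg _)
      _ = ‖O₁‖ := by rw [hUnorm, hsUnorm]; ring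
  have hQ : ‖Q‖ ≤ ‖O₂‖ := by
    calc ‖star U * O₂ * U‖ ≤ ‖star U * O₂‖ * ‖U‖ := Matrix.l2_opNorm_mul _ _
      _ ≤ ‖star U‖ * ‖O₂‖ * ‖U‖ :=
        mul_le_mul_of_nonneg_right (Matrix.l2_opNorm_mul _ _) (norm_nonneg _)
      _ = ‖O₂‖ := by rw [hUnorm, hsUnorm]; ring
  -- rewrite exponentials
  have e₁ : (-(z:ℂ) * β) = ((-(z*β) : ℝ) : ℂ) := by push_cast; ring
  have e₂ : (-(1-(z:ℂ)) * β) = ((-((1-z)*β) : ℝ) : ℂ) := by push_cast; ring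
  rw [e₁, e₂, exp_real_smul_herm H hH _, exp_real_smul_herm H hH _,
    trace_conj_id _ _ _ _ _ _ h1 h2, trace_entry]
  -- abbreviations for the real quantities
  set E : Fin n → ℝ := fun i => Real.exp (-β * lam i) with hE
  set a : Fin n → Fin n → ℝ := fun i j => ‖P i j‖ * ‖Q j i‖ with ha
  have hanonneg : ∀ i j, 0 ≤ a i j := fun i j => by positivity
  have key : ∀ i j : Fin n,
      Real.exp (-(z*β) * lam j) * Real.exp (-((1-z)*β) * lam i) ≤
        (1-z) * E i + z * E j := by
    intro i j
    have hgm := Real.geom_mean_le_arith_mean2_weighted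
      (sub_nonneg.2 hz1) hz0 (Real.exp_pos (-β * lam i)).le (Real.exp_pos (-β * lam j)).le
      (by ring)
    calc Real.exp (-(z*β) * lam j) * Real.exp (-((1-z)*β) * lam i)
        = (Real.exp (-β * lam i)) ^ (1-z : ℝ) * (Real.exp (-β * lam j)) ^ (z : ℝ) := by
          rw [← Real.exp_log (x := (Real.exp (-β * lam i)) ^ (1-z : ℝ)) (by positivity),
            ← Real.exp_log (x := (Real.exp (-β * lam j)) ^ (z : ℝ)) (by positivity),
            Real.log_rpow (Real.exp_pos _), Real.log_rpow (Real.exp_pos _),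
            Real.log_exp, Real.log_exp, ← Real.exp_add, ← Real.exp_add]
          congr 1
          ring
      _ ≤ (1-z) * E i + z * E j := hgm
  -- bound the double sum
  have hnorm_le : ‖∑ i, ∑ j, P i j * (Real.exp (-(z*β) * lam j) : ℂ) * Q j i *
      (Real.exp (-((1-z)*β) * lam i) : ℂ)‖ ≤
      ∑ i, ∑ j, a i j * ((1-z) * E i + z * E j) := by
    refine (norm_sum_le _ _).trans ?_
    refine Finset.sum_le_sum fun i _ => ?_
    refine (norm_sum_le _ _).trans ?_
    refine Finset.sum_le_sum fun j _ => ?_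
    rw [norm_mul, norm_mul, norm_mul]
    simp only [Complex.norm_real, Real.norm_eq_abs, abs_of_pos (Real.exp_pos _)]
    calc ‖P i j‖ * Real.exp (-(z*β) * lam j) * ‖Q j i‖ * Real.exp (-((1-z)*β) * lam i)
        = a i j * (Real.exp (-(z*β) * lam j) * Real.exp (-((1-z)*β) * lam i)) := by
          rw [ha]; ring
      _ ≤ a i j * ((1-z) * E i + z * E j) :=
          mul_le_mul_of_nonneg_left (key i j) (hanonneg i j)
  refine hnorm_le.trans ?_
  have hsplit : ∑ i, ∑ j, a i j * ((1-z) * E i + z * E j) =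
      (1-z) * ∑ i, E i * ∑ j, a i j + z * ∑ j, E j * ∑ i, a i j := by
    simp only [mul_add, Finset.sum_add_distrib]
    congr 1
    · rw [Finset.mul_sum]
      refine Finset.sum_congr rfl fun i _ => ?_
      rw [Finset.mul_sum, Finset.mul_sum]
      refine Finset.sum_congr rfl fun j _ => ?_
      ring
    · rw [Finset.sum_comm, Finset.mul_sum]
      refine Finset.sum_congr rfl fun j _ => ?_
      rw [Finset.mul_sum, Finset.mul_sum]
      refine Finset.sum_congr rfl fun i _ => ?_
      ring
  rw [hsplit]
  set S : ℝ := ∑ i, E i with hS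
  have hSnonneg : 0 ≤ S := Finset.sum_nonneg fun i _ => (Real.exp_pos _).le
  have hKnonneg : (0:ℝ) ≤ ‖P‖ * ‖Q‖ := by positivity
  have hrow : ∑ i, E i * ∑ j, a i j ≤ S * (‖P‖ * ‖Q‖) := by
    rw [hS, Finset.sum_mul]
    refine Finset.sum_le_sum fun i _ => ?_
    exact mul_le_mul_of_nonneg_left (row_col_pair_le P Q i) (Real.exp_pos _).le
  have hcol : ∑ j, E j * ∑ i, a i j ≤ S * (‖P‖ * ‖Q‖) := by
    rw [hS, Finset.sum_mul]
    refine Finset.sum_le_sum fun j _ => ?_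
    refine mul_le_mul_of_nonneg_left ?_ (Real.exp_pos _).le
    have := row_col_pair_le Q P j
    calc ∑ i, a i j = ∑ i, ‖Q j i‖ * ‖P i j‖ := by
          refine Finset.sum_congr rfl fun i _ => ?_
          rw [ha]; ring
      _ ≤ ‖Q‖ * ‖P‖ := this
      _ = ‖P‖ * ‖Q‖ := mul_comm _ _
  have hPQ : ‖P‖ * ‖Q‖ ≤ ‖O₁‖ * ‖O₂‖ :=
    mul_le_mul hP hQ (norm_nonneg _) (norm_nonneg _)
  calc (1-z) * ∑ i, E i * ∑ j, a i j + z * ∑ j, E j * ∑ i, a i j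
      ≤ (1-z) * (S * (‖P‖ * ‖Q‖)) + z * (S * (‖P‖ * ‖Q‖)) :=
        add_le_add (mul_le_mul_of_nonneg_left hrow (by linarith))
          (mul_le_mul_of_nonneg_left hcol hz0)
    _ = ‖P‖ * ‖Q‖ * S := by ring
    _ ≤ ‖O₁‖ * ‖O₂‖ * S := mul_le_mul_of_nonneg_right hPQ hSnonneg

/-- The trace of `exp (-βH)` in terms of eigenvalues. -/
theorem trace_exp_re {n : ℕ} (H : Matrix (Fin n) (Fin n) ℂ) (hH : H.IsHermitian) (β : ℝ) :
    (Matrix.trace (exp ((-β : ℂ) • H))).re = ∑ i, Real.exp (-β * hH.eigenvalues i) := by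
  have e : ((-β : ℂ)) = ((-β : ℝ) : ℂ) := by push_cast; ring
  rw [e, exp_real_smul_herm H hH (-β), Matrix.trace_mul_cycle,
    Unitary.coe_star_mul_self, one_mul, Matrix.trace_diagonal]
  push_cast
  simp [← Complex.ofReal_mul, ← Complex.ofReal_neg, ← Complex.ofReal_exp, Complex.ofReal_re]

end Aux

set_option maxHeartbeats 1600000 in
/-- **Bound on the Duhamel two-point function.**
For Hermitian `H`, `β ≥ 0` and arbitrary matrices `O₁`, `O₂`:
`|∫₀¹ Tr(O₁ exp(-zβH) O₂ exp(-(1-z)βH)) dz| ≤ ‖O₁‖ ‖O₂‖ Tr(exp(-βH))`,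
with `‖·‖` the `ℓ²`-operator norm; in particular the normalized Duhamel two-point
function is bounded by `‖O₁‖ ‖O₂‖`. -/
theorem duhamel_two_point_bound {n : ℕ}
    (H : Matrix (Fin n) (Fin n) ℂ) (hH : H.IsHermitian)
    (β : ℝ) (hβ : 0 ≤ β)
    (O₁ O₂ : Matrix (Fin n) (Fin n) ℂ) :
    ‖(∫ z in (0:ℝ)..1,
        Matrix.trace (O₁ * exp ((-(z : ℂ) * β) • H) * O₂ *
          exp ((-(1 - (z : ℂ)) * β) • H)))‖ ≤
      ‖O₁‖ * ‖O₂‖ * (Matrix.trace (exp ((-β : ℂ) • H))).re := by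
  rw [trace_exp_re H hH β]
  have hbound := intervalIntegral.norm_integral_le_of_norm_le_const
    (a := (0:ℝ)) (b := 1) (C := ‖O₁‖ * ‖O₂‖ * ∑ i, Real.exp (-β * hH.eigenvalues i))
    (f := fun z => Matrix.trace (O₁ * exp ((-(z : ℂ) * β) • H) * O₂ *
          exp ((-(1 - (z : ℂ)) * β) • H)))
    (fun x hx => by
      rw [Set.uIoc_of_le zero_le_one] at hx
      exact duhamel_pointwise H hH β hβ O₁ O₂ x hx.1.le hx.2)
  simpa using hbound
end

section
/- Derivative of the log-partition function: let H and K be n×n Hermitian complex matrices and β a real number. Then the map λ ↦ log Tr(exp(−β(H + λK))) from ℝ to ℝ is differentiable, and its derivative at λ₀ equals −β · Tr(K · exp(−β(H + λ₀K))) / Tr(exp(−β(H + λ₀K))). -/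
open scoped Matrix
open NormedSpace -- for `exp`

section Aux

/-- Derivative of `λ ↦ Tr exp (A + λ B)` for complex matrices (no commutation needed). -/
theorem trace_exp_hasDerivAt_aux {n : ℕ} (hn : 0 < n)
    (A B : Matrix (Fin n) (Fin n) ℂ) (lam0 : ℝ) :
    HasDerivAt (fun lam : ℝ => Matrix.trace (NormedSpace.exp (A + (lam : ℂ) • B)))
      (Matrix.trace (B * NormedSpace.exp (A + (lam0 : ℂ) • B))) lam0 := by
  haveI : Nonempty (Fin n) := Fin.pos_iff_nonempty.mp hn
  letI : SeminormedRing (Matrix (Fin n) (Fin n) ℂ) := Matrix.linftyOpSemiNormedRing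
  letI : NormedRing (Matrix (Fin n) (Fin n) ℂ) := Matrix.linftyOpNormedRing
  letI : NormedAlgebra ℂ (Matrix (Fin n) (Fin n) ℂ) := Matrix.linftyOpNormedAlgebra
  letI : NormOneClass (Matrix (Fin n) (Fin n) ℂ) := Matrix.linfty_opNormOneClass
  letI : NormedSpace ℝ (Matrix (Fin n) (Fin n) ℂ) := NormedSpace.complexToReal
  letI : Norm (Matrix (Fin n) (Fin n) ℂ →L[ℂ] ℂ) := ContinuousLinearMap.hasOpNorm
  -- the trace as a continuous linear map
  let T : Matrix (Fin n) (Fin n) ℂ →L[ℂ] ℂ :=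
    LinearMap.toContinuousLinearMap (Matrix.traceLinearMap (Fin n) ℂ ℂ)
  have hT : ∀ x : Matrix (Fin n) (Fin n) ℂ, T x = Matrix.trace x := fun _ => rfl
  -- `trace (B * ·)` as a continuous linear map
  let S : Matrix (Fin n) (Fin n) ℂ →L[ℂ] ℂ := LinearMap.toContinuousLinearMap
    ((Matrix.traceLinearMap (Fin n) ℂ ℂ).comp (LinearMap.mulLeft ℂ B))
  have hS : ∀ x : Matrix (Fin n) (Fin n) ℂ, S x = Matrix.trace (B * x) := fun _ => rfl
  -- the path
  set X : ℝ → Matrix (Fin n) (Fin n) ℂ := fun t => A + (t : ℂ) • B with hXdef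
  have hX : ∀ t : ℝ, HasDerivAt X B t := by
    intro t
    have h1 : HasDerivAt (fun s : ℝ => s • B) ((1 : ℝ) • B) t :=
      (hasDerivAt_id t).smul_const B
    have h2 : HasDerivAt (fun s : ℝ => A + s • B) ((1 : ℝ) • B) t := h1.const_add A
    simpa [hXdef, Complex.coe_smul] using h2
  -- derivative of powers of the path
  have hpow : ∀ (k : ℕ) (t : ℝ), HasDerivAt (fun s : ℝ => X s ^ k)
      (∑ i ∈ Finset.range k, X t ^ i * B * X t ^ (k - 1 - i)) t := by
    intro k
    induction k with
    | zero =>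
        intro t
        simp only [pow_zero, Finset.range_zero, Finset.sum_empty]
        exact hasDerivAt_const t _
    | succ k ih =>
        intro t
        have h1 := (ih t).mul (hX t)
        have h2 : ((fun s => X s ^ k) * X) = fun s => X s ^ (k + 1) := by
          funext s; rw [Pi.mul_apply, ← pow_succ]
        rw [h2] at h1
        have h3 : ∑ i ∈ Finset.range (k + 1), X t ^ i * B * X t ^ (k + 1 - 1 - i)
            = (∑ i ∈ Finset.range k, X t ^ i * B * X t ^ (k - 1 - i)) * X t
              + X t ^ k * B := by
          rw [Finset.sum_range_succ, Finset.sum_mul]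
          congr 1
          · refine Finset.sum_congr rfl fun i hi => ?_
            have hik : i < k := Finset.mem_range.mp hi
            have he : k + 1 - 1 - i = (k - 1 - i) + 1 := by omega
            rw [he, pow_succ, ← mul_assoc]
          · simp
        rw [h3]
        exact h1
  -- the summands of the series and their derivatives
  set g : ℕ → ℝ → ℂ :=
    fun k t => ((k.factorial : ℂ))⁻¹ * Matrix.trace (X t ^ k) with hgdef
  set g' : ℕ → ℝ → ℂ :=
    fun k t => ((k.factorial : ℂ))⁻¹ * ((k : ℂ) * Matrix.trace (B * X t ^ (k - 1))) with hg'def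
  have hg : ∀ (k : ℕ) (t : ℝ), HasDerivAt (g k) (g' k t) t := by
    intro k t
    have hd := ((T.restrictScalars ℝ).hasFDerivAt).comp_hasDerivAt t (hpow k t)
    have htrace : (T.restrictScalars ℝ) (∑ i ∈ Finset.range k, X t ^ i * B * X t ^ (k - 1 - i))
        = (k : ℂ) * Matrix.trace (B * X t ^ (k - 1)) := by
      rw [map_sum]
      have hterm : ∀ i ∈ Finset.range k,
          (T.restrictScalars ℝ) (X t ^ i * B * X t ^ (k - 1 - i))
            = Matrix.trace (B * X t ^ (k - 1)) := by
        intro i hi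
        have hik : i < k := Finset.mem_range.mp hi
        show Matrix.trace (X t ^ i * B * X t ^ (k - 1 - i)) = _
        rw [Matrix.trace_mul_cycle, ← pow_add]
        have : k - 1 - i + i = k - 1 := by omega
        rw [this, Matrix.trace_mul_comm]
      rw [Finset.sum_congr rfl hterm, Finset.sum_const, Finset.card_range,
        nsmul_eq_mul]
    replace hd := hd.congr_deriv htrace
    exact (hd.const_mul (((k.factorial : ℂ))⁻¹ : ℂ))
  -- bounds
  set R : ℝ := ‖A‖ + (|lam0| + 1) * ‖B‖ with hRdef
  have hXnorm : ∀ t ∈ Metric.ball lam0 1, ‖X t‖ ≤ R := by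
    intro t ht
    have h1 : |t - lam0| < 1 := by simpa [Real.dist_eq] using ht
    have h2 : |t| ≤ |lam0| + 1 := by
      have := abs_sub_abs_le_abs_sub t lam0
      linarith
    calc ‖X t‖ ≤ ‖A‖ + ‖(t : ℂ) • B‖ := norm_add_le _ _
      _ = ‖A‖ + |t| * ‖B‖ := by
          rw [norm_smul, Complex.norm_real, Real.norm_eq_abs]
      _ ≤ R := by
          have := mul_le_mul_of_nonneg_right h2 (norm_nonneg B)
          rw [hRdef]; linarith
  have hR0 : (0 : ℝ) ≤ R := by
    have : (0:ℝ) ≤ (|lam0| + 1) * ‖B‖ := by positivity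
    have := norm_nonneg A
    rw [hRdef]; linarith
  have hpowle : ∀ (k : ℕ) (x : Matrix (Fin n) (Fin n) ℂ), ‖x ^ k‖ ≤ ‖x‖ ^ k := by
    intro k x
    cases k with
    | zero => simp
    | succ k => exact norm_pow_le' x k.succ_pos
  set u : ℕ → ℝ := fun k => Nat.casesOn k 0 fun k => ‖S‖ * (R ^ k / k.factorial) with hudef
  have hu : Summable u := by
    refine (summable_nat_add_iff 1).mp ?_
    simpa using (Real.summable_pow_div_factorial R).mul_left ‖S‖
  have hbound : ∀ (k : ℕ), ∀ t ∈ Metric.ball lam0 1, ‖g' k t‖ ≤ u k := by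
    intro k t ht
    cases k with
    | zero => simp [hg'def, hudef]
    | succ k =>
        have hXk : ‖X t ^ k‖ ≤ R ^ k :=
          (hpowle k (X t)).trans (pow_le_pow_left₀ (norm_nonneg _) (hXnorm t ht) k)
        have hSb : ‖Matrix.trace (B * X t ^ k)‖ ≤ ‖S‖ * R ^ k := by
          have := S.le_opNorm (X t ^ k)
          change ‖Matrix.trace (B * X t ^ k)‖ ≤ _ at this
          calc ‖Matrix.trace (B * X t ^ k)‖ ≤ ‖S‖ * ‖X t ^ k‖ := this
            _ ≤ ‖S‖ * R ^ k := by
                exact mul_le_mul_of_nonneg_left hXk S.opNorm_nonneg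
        have hne : (((k+1:ℕ)) : ℝ) ≠ 0 := Nat.cast_ne_zero.mpr (Nat.succ_ne_zero k)
        have hnorm : ‖g' (k+1) t‖
            = (((k+1).factorial : ℝ))⁻¹ * ((((k+1:ℕ)) : ℝ) * ‖Matrix.trace (B * X t ^ k)‖) := by
          show ‖(((k+1).factorial : ℂ))⁻¹ * ((((k+1:ℕ)) : ℂ) * Matrix.trace (B * X t ^ (k+1-1)))‖ = _
          rw [norm_mul, norm_mul, norm_inv, Complex.norm_natCast, Complex.norm_natCast,
            Nat.add_sub_cancel]
        rw [hnorm]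
        have hfac : (((k+1).factorial : ℝ))⁻¹ * (((k+1:ℕ)) : ℝ) = ((k.factorial : ℝ))⁻¹ := by
          have h1 : (((k+1).factorial : ℕ) : ℝ) = (((k+1:ℕ)) : ℝ) * ((k.factorial : ℕ) : ℝ) := by
            rw [Nat.factorial_succ]; push_cast; ring
          rw [h1, mul_inv, mul_assoc, mul_comm ((k.factorial:ℝ))⁻¹, ← mul_assoc,
            inv_mul_cancel₀ hne, one_mul]
        calc (((k+1).factorial : ℝ))⁻¹ * ((((k+1:ℕ)) : ℝ) * ‖Matrix.trace (B * X t ^ k)‖)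
            ≤ (((k+1).factorial : ℝ))⁻¹ * ((((k+1:ℕ)) : ℝ) * (‖S‖ * R ^ k)) := by
              have h1 : (0:ℝ) ≤ (((k+1).factorial : ℝ))⁻¹ := by positivity
              have h2 : (0:ℝ) ≤ (((k+1:ℕ)) : ℝ) := by positivity
              exact mul_le_mul_of_nonneg_left
                (mul_le_mul_of_nonneg_left hSb h2) h1
          _ = ‖S‖ * (R ^ k / k.factorial) := by
              rw [← mul_assoc, hfac, div_eq_mul_inv]; ring
  -- summability of the series at `lam0`
  have hgsum : ∀ t : ℝ, Summable fun k => g k t := by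
    intro t
    have h1 : Summable fun k : ℕ => ((k.factorial : ℂ))⁻¹ • X t ^ k :=
      expSeries_summable' (𝕂 := ℂ) (X t)
    have h2 := h1.map (T.restrictScalars ℝ) (T.restrictScalars ℝ).continuous
    have h3 : ((T.restrictScalars ℝ) ∘ fun k : ℕ => ((k.factorial : ℂ))⁻¹ • X t ^ k)
        = fun k => g k t := by
      funext k
      show T (((k.factorial : ℂ))⁻¹ • X t ^ k) = _
      rw [map_smul, smul_eq_mul, hT, hgdef]
    rwa [h3] at h2
  -- the function equals the series
  have hfun : ∀ t : ℝ, Matrix.trace (NormedSpace.exp (X t)) = ∑' k, g k t := by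
    intro t
    have h1 : Summable fun k : ℕ => ((k.factorial : ℂ))⁻¹ • X t ^ k :=
      expSeries_summable' (𝕂 := ℂ) (X t)
    have h2 := (T.restrictScalars ℝ).map_tsum h1
    rw [NormedSpace.exp_eq_tsum ℂ]
    calc Matrix.trace (∑' k : ℕ, ((k.factorial : ℂ))⁻¹ • X t ^ k)
        = (T.restrictScalars ℝ) (∑' k : ℕ, ((k.factorial : ℂ))⁻¹ • X t ^ k) := rfl
      _ = ∑' k : ℕ, (T.restrictScalars ℝ) (((k.factorial : ℂ))⁻¹ • X t ^ k) := h2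
      _ = ∑' k, g k t := by
          congr 1; funext k
          show T (((k.factorial : ℂ))⁻¹ • X t ^ k) = _
          rw [map_smul, smul_eq_mul, hT, hgdef]
  -- the derivative series sums to the claimed value
  have hg'sum : Summable fun k => g' k lam0 :=
    Summable.of_norm_bounded hu fun k => hbound k lam0 (Metric.mem_ball_self one_pos)
  have hderiv : ∑' k, g' k lam0 = Matrix.trace (B * NormedSpace.exp (X lam0)) := by
    rw [hg'sum.tsum_eq_zero_add]
    have h0 : g' 0 lam0 = 0 := by simp [hg'def]
    have hshift : ∀ k : ℕ, g' (k + 1) lam0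
        = (S.restrictScalars ℝ) (((k.factorial : ℂ))⁻¹ • X lam0 ^ k) := by
      intro k
      show ((k+1).factorial : ℂ)⁻¹ * (((k+1 : ℕ) : ℂ) * Matrix.trace (B * X lam0 ^ (k + 1 - 1)))
        = (S.restrictScalars ℝ) (((k.factorial : ℂ))⁻¹ • X lam0 ^ k)
      have hnec : (((k+1:ℕ)) : ℂ) ≠ 0 := Nat.cast_ne_zero.mpr (Nat.succ_ne_zero k)
      have hfac : ((k+1).factorial : ℂ)⁻¹ * ((k+1 : ℕ) : ℂ) = ((k.factorial : ℂ))⁻¹ := by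
        have h1 : (((k+1).factorial : ℕ) : ℂ) = (((k+1:ℕ)) : ℂ) * ((k.factorial : ℕ) : ℂ) := by
          rw [Nat.factorial_succ]; push_cast; ring
        rw [h1, mul_inv, mul_assoc, mul_comm ((k.factorial:ℂ))⁻¹, ← mul_assoc,
          inv_mul_cancel₀ hnec, one_mul]
      have : (S.restrictScalars ℝ) (((k.factorial : ℂ))⁻¹ • X lam0 ^ k)
          = ((k.factorial : ℂ))⁻¹ * Matrix.trace (B * X lam0 ^ k) := by
        show S (((k.factorial : ℂ))⁻¹ • X lam0 ^ k) = _
        rw [map_smul, smul_eq_mul, hS]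
      rw [this, ← mul_assoc, hfac]
      norm_num
    have h2 : ∑' k : ℕ, g' (k + 1) lam0
        = Matrix.trace (B * NormedSpace.exp (X lam0)) := by
      have h1 : Summable fun k : ℕ => ((k.factorial : ℂ))⁻¹ • X lam0 ^ k :=
        expSeries_summable' (𝕂 := ℂ) (X lam0)
      have h3 := (S.restrictScalars ℝ).map_tsum h1
      calc ∑' k : ℕ, g' (k + 1) lam0
          = ∑' k : ℕ, (S.restrictScalars ℝ) (((k.factorial : ℂ))⁻¹ • X lam0 ^ k) := by
            congr 1; funext k; exact hshift k
        _ = (S.restrictScalars ℝ) (∑' k : ℕ, ((k.factorial : ℂ))⁻¹ • X lam0 ^ k) := h3.symm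
        _ = Matrix.trace (B * NormedSpace.exp (X lam0)) := by
            rw [NormedSpace.exp_eq_tsum ℂ]
            rfl
    rw [h0, h2, zero_add]
  -- assemble
  have key := hasDerivAt_tsum_of_isPreconnected hu Metric.isOpen_ball
    (convex_ball lam0 1).isPreconnected
    (fun k y _ => hg k y) hbound (Metric.mem_ball_self one_pos)
    (hgsum lam0) (Metric.mem_ball_self one_pos)
  rw [hderiv] at key
  have hfun2 : (fun z : ℝ => ∑' k, g k z) = fun lam : ℝ => Matrix.trace (NormedSpace.exp (X lam)) := by
    funext z; exact (hfun z).symm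
  rw [hfun2] at key
  exact key

/-- The real part of the trace of `exp M` is positive for Hermitian `M`. -/
theorem trace_exp_re_pos_aux {n : ℕ} (hn : 0 < n) (M : Matrix (Fin n) (Fin n) ℂ)
    (hM : M.IsHermitian) : 0 < (Matrix.trace (NormedSpace.exp M)).re := by
  haveI : Nonempty (Fin n) := Fin.pos_iff_nonempty.mp hn
  have hhalf : ((2⁻¹ : ℂ) • M).IsHermitian := by
    show ((2⁻¹ : ℂ) • M)ᴴ = _
    rw [Matrix.conjTranspose_smul, hM.eq]
    norm_num
  set E := NormedSpace.exp ((2⁻¹ : ℂ) • M) with hEdef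
  have hEH : Eᴴ = E := Matrix.IsHermitian.exp hhalf
  have hsplit : NormedSpace.exp M = Eᴴ * E := by
    have hsum : (2⁻¹ : ℂ) • M + (2⁻¹ : ℂ) • M = M := by
      rw [← add_smul]; norm_num
    rw [hEH]
    calc NormedSpace.exp M = NormedSpace.exp ((2⁻¹ : ℂ) • M + (2⁻¹ : ℂ) • M) := by rw [hsum]
      _ = E * E := Matrix.exp_add_of_commute _ _ (Commute.refl _)
  have hre : (Matrix.trace (Eᴴ * E)).re = ∑ i, ∑ j, Complex.normSq (E j i) := by
    rw [Matrix.trace, Complex.re_sum]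
    refine Finset.sum_congr rfl fun i _ => ?_
    simp only [Matrix.diag, Matrix.mul_apply, Matrix.conjTranspose_apply]
    rw [Complex.re_sum]
    refine Finset.sum_congr rfl fun j _ => ?_
    rw [Complex.star_def, mul_comm, Complex.mul_conj, Complex.ofReal_re]
  have hEne : E ≠ 0 := by
    haveI : Nontrivial (Matrix (Fin n) (Fin n) ℂ) := inferInstance
    exact (Matrix.isUnit_exp _).ne_zero
  obtain ⟨i0, j0, hij⟩ : ∃ i j, E i j ≠ 0 := by
    by_contra h
    push_neg at h
    exact hEne (by ext i j; simpa using h i j)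
  rw [hsplit, hre]
  refine Finset.sum_pos'
    (fun i _ => Finset.sum_nonneg fun j _ => Complex.normSq_nonneg _)
    ⟨j0, Finset.mem_univ _, ?_⟩
  exact Finset.sum_pos'
    (fun j _ => Complex.normSq_nonneg _)
    ⟨i0, Finset.mem_univ _, Complex.normSq_pos.mpr hij⟩


end Aux

/-- **Derivative of the log-partition function.**
For Hermitian `H`, `K` and real `β`, the map `λ ↦ log Tr(exp(-β(H + λK)))` is
differentiable, with derivative at `λ₀` equal to
`-β · Tr(K exp(-β(H + λ₀K))) / Tr(exp(-β(H + λ₀K)))` (all traces are real and we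
work with their real parts). -/
theorem log_partition_function_hasDerivAt {n : ℕ}
    (H K : Matrix (Fin n) (Fin n) ℂ) (hH : H.IsHermitian) (hK : K.IsHermitian)
    (β : ℝ) (lam0 : ℝ) :
    HasDerivAt
      (fun lam : ℝ =>
        Real.log ((Matrix.trace (NormedSpace.exp ((-β : ℂ) • (H + (lam : ℂ) • K)))).re))
      (-β * (Matrix.trace (K * NormedSpace.exp ((-β : ℂ) • (H + (lam0 : ℂ) • K)))).re /
        (Matrix.trace (NormedSpace.exp ((-β : ℂ) • (H + (lam0 : ℂ) • K)))).re)
      lam0 := by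
  obtain rfl | hn := Nat.eq_zero_or_pos n
  · have htr : ∀ M : Matrix (Fin 0) (Fin 0) ℂ, Matrix.trace M = 0 := fun M => by
      simp [Matrix.trace]
    simp only [htr, Complex.zero_re, mul_zero, zero_div]
    simpa using hasDerivAt_const lam0 (Real.log 0)
  · have hrw : ∀ lam : ℝ, (-β : ℂ) • (H + (lam : ℂ) • K)
        = ((-β : ℂ) • H) + (lam : ℂ) • ((-β : ℂ) • K) := by
      intro lam; rw [smul_add, smul_comm]
    have h1 := trace_exp_hasDerivAt_aux hn ((-β : ℂ) • H) ((-β : ℂ) • K) lam0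
    have h1' : HasDerivAt
        (fun lam : ℝ => Matrix.trace (NormedSpace.exp ((-β : ℂ) • (H + (lam : ℂ) • K))))
        ((-β : ℂ) * Matrix.trace (K * NormedSpace.exp ((-β : ℂ) • (H + (lam0 : ℂ) • K)))) lam0 := by
      simp_rw [hrw]
      have : Matrix.trace (((-β : ℂ) • K) * NormedSpace.exp (((-β : ℂ) • H) + (lam0 : ℂ) • ((-β : ℂ) • K)))
          = (-β : ℂ) * Matrix.trace (K * NormedSpace.exp (((-β : ℂ) • H) + (lam0 : ℂ) • ((-β : ℂ) • K))) := by
        rw [Matrix.smul_mul, Matrix.trace_smul, smul_eq_mul]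
      rw [← this]
      exact h1
    have h2 : HasDerivAt
        (fun lam : ℝ => (Matrix.trace (NormedSpace.exp ((-β : ℂ) • (H + (lam : ℂ) • K)))).re)
        (-β * (Matrix.trace (K * NormedSpace.exp ((-β : ℂ) • (H + (lam0 : ℂ) • K)))).re) lam0 := by
      have h3 := Complex.reCLM.hasFDerivAt.comp_hasDerivAt lam0 h1'
      have h4 : Complex.reCLM ((-β : ℂ) * Matrix.trace (K * NormedSpace.exp ((-β : ℂ) • (H + (lam0 : ℂ) • K))))
          = -β * (Matrix.trace (K * NormedSpace.exp ((-β : ℂ) • (H + (lam0 : ℂ) • K)))).re := by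
        show ((-β : ℂ) * _).re = _
        rw [show ((-β : ℂ)) = ((-β : ℝ) : ℂ) by push_cast; ring, Complex.re_ofReal_mul]
      rw [h4] at h3
      exact h3
    have hMH : ((-β : ℂ) • (H + (lam0 : ℂ) • K)).IsHermitian := by
      show _ᴴ = _
      rw [Matrix.conjTranspose_smul, Matrix.conjTranspose_add, Matrix.conjTranspose_smul,
        hH.eq, hK.eq]
      simp [Complex.star_def, Complex.conj_ofReal]
    have hpos := trace_exp_re_pos_aux hn _ hMH
    exact h2.log (ne_of_gt hpos)
end

section
/- Convexity of the free energy: let A and B be n×n Hermitian complex matrices. Then the function h ↦ log Tr(exp(A + hB)) from ℝ to ℝ is convex. -/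
open scoped Matrix
open NormedSpace -- for `exp`

namespace FreeEnergyAux

variable {n : ℕ}

lemma herm_real_smul {B : Matrix (Fin n) (Fin n) ℂ} (hB : B.IsHermitian) (r : ℝ) :
    (((r : ℝ) : ℂ) • B).IsHermitian := by
  unfold Matrix.IsHermitian
  rw [Matrix.conjTranspose_smul, hB]
  simp

lemma conj_mul_re (r : ℝ) (z : ℂ) :
    ((starRingEnd ℂ) z * ((r : ℂ) * z)).re = r * Complex.normSq z := by
  have h : (starRingEnd ℂ) z * ((r : ℂ) * z) = ((r * Complex.normSq z : ℝ) : ℂ) := by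
    rw [show (starRingEnd ℂ) z * ((r : ℂ) * z) = (r : ℂ) * (z * (starRingEnd ℂ) z) by ring,
      Complex.mul_conj]
    push_cast
    ring
  rw [h, Complex.ofReal_re]

set_option linter.unusedTactic false

lemma exp_spectral {H : Matrix (Fin n) (Fin n) ℂ} (hH : H.IsHermitian) :
    exp H = (hH.eigenvectorUnitary : Matrix (Fin n) (Fin n) ℂ) *
      Matrix.diagonal (fun i => ((Real.exp (hH.eigenvalues i) : ℝ) : ℂ)) *
      (hH.eigenvectorUnitary : Matrix (Fin n) (Fin n) ℂ)ᴴ := by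
  set W : Matrix (Fin n) (Fin n) ℂ := (hH.eigenvectorUnitary : Matrix (Fin n) (Fin n) ℂ) with hW
  have hW2 : W * Wᴴ = 1 := by
    simpa [Matrix.star_eq_conjTranspose] using
      Matrix.mem_unitaryGroup_iff.mp hH.eigenvectorUnitary.2
  have hW1 : Wᴴ * W = 1 := by
    simpa [Matrix.star_eq_conjTranspose] using
      Matrix.mem_unitaryGroup_iff'.mp hH.eigenvectorUnitary.2
  have hWu : IsUnit W := ⟨⟨W, Wᴴ, hW2, hW1⟩, rfl⟩
  have hWinv : W⁻¹ = Wᴴ := Matrix.inv_eq_right_inv hW2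
  have hdiag : exp (Matrix.diagonal ((RCLike.ofReal ∘ hH.eigenvalues) : Fin n → ℂ)) =
      Matrix.diagonal (fun i => ((Real.exp (hH.eigenvalues i) : ℝ) : ℂ)) := by
    rw [Matrix.exp_diagonal]
    congr 1
    funext i
    rw [Pi.exp_def]
    simp [Function.comp, ← Complex.exp_eq_exp_ℂ, ← Complex.ofReal_exp]
  conv_lhs => rw [hH.spectral_theorem, Unitary.conjStarAlgAut_apply]
  rw [Matrix.star_eq_conjTranspose, ← hW, ← hWinv, Matrix.exp_conj _ _ hWu, hdiag, hWinv]

lemma herm_decomp {H : Matrix (Fin n) (Fin n) ℂ} (hH : H.IsHermitian) :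
    ∃ W : Matrix (Fin n) (Fin n) ℂ,
      Wᴴ * W = 1 ∧ W * Wᴴ = 1 ∧
      H = W * Matrix.diagonal (fun i => ((hH.eigenvalues i : ℝ) : ℂ)) * Wᴴ ∧
      exp H = W * Matrix.diagonal (fun i => ((Real.exp (hH.eigenvalues i) : ℝ) : ℂ)) * Wᴴ := by
  refine ⟨(hH.eigenvectorUnitary : Matrix (Fin n) (Fin n) ℂ), ?_, ?_, ?_, exp_spectral hH⟩
  · simpa [Matrix.star_eq_conjTranspose] using
      Matrix.mem_unitaryGroup_iff'.mp hH.eigenvectorUnitary.2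
  · simpa [Matrix.star_eq_conjTranspose] using
      Matrix.mem_unitaryGroup_iff.mp hH.eigenvectorUnitary.2
  · conv_lhs => rw [hH.spectral_theorem, Unitary.conjStarAlgAut_apply]
    rw [Matrix.star_eq_conjTranspose]
    rfl

/-- Peierls–Bogoliubov tangent inequality. -/
lemma tangent (hn : 0 < n) (M V : Matrix (Fin n) (Fin n) ℂ)
    (hM : M.IsHermitian) (hV : V.IsHermitian) :
    Real.log ((Matrix.trace (exp M)).re) +
      (Matrix.trace (exp M * V)).re / (Matrix.trace (exp M)).re
      ≤ Real.log ((Matrix.trace (exp (M + V))).re) := by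
  classical
  haveI : Nonempty (Fin n) := Fin.pos_iff_nonempty.mp hn
  have hK : (M + V).IsHermitian := hM.add hV
  obtain ⟨W, hW1, hW2, hMsp, hexpM⟩ := herm_decomp hM
  obtain ⟨U, hU1, hU2, hKsp, hexpK⟩ := herm_decomp hK
  set lam := hM.eigenvalues with hlam
  set mu := hK.eigenvalues with hmu
  set S : Matrix (Fin n) (Fin n) ℂ := Uᴴ * W with hSdef
  have hSH : Sᴴ = Wᴴ * U := by
    rw [hSdef, Matrix.conjTranspose_mul, Matrix.conjTranspose_conjTranspose]
  set P : Fin n → Fin n → ℝ := fun j i => Complex.normSq (S j i) with hPdef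
  set v : Fin n → ℝ := fun i => ((Wᴴ * V * W) i i).re with hvdef
  set Z := ∑ i, Real.exp (lam i) with hZdef
  set T := ∑ i, Real.exp (lam i) * v i with hTdef
  have hZpos : 0 < Z :=
    Finset.sum_pos (fun i _ => Real.exp_pos _) Finset.univ_nonempty
  -- trace of exp M
  have htrM : (Matrix.trace (exp M)).re = Z := by
    rw [hexpM, Matrix.trace_mul_cycle, hW1, one_mul, Matrix.trace_diagonal, Complex.re_sum,
      hZdef]
    exact Finset.sum_congr rfl fun i _ => Complex.ofReal_re _
  -- trace of exp M * V
  have htrMV : (Matrix.trace (exp M * V)).re = T := by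
    have e1 : exp M * V =
        W * Matrix.diagonal (fun i => ((Real.exp (lam i) : ℝ) : ℂ)) * (Wᴴ * V) := by
      rw [hexpM, Matrix.mul_assoc]
    rw [e1, Matrix.trace_mul_cycle, Matrix.trace_mul_comm]
    have e2 : ∀ X : Matrix (Fin n) (Fin n) ℂ,
        Matrix.trace (Matrix.diagonal (fun i => ((Real.exp (lam i) : ℝ) : ℂ)) * X)
          = ∑ i, ((Real.exp (lam i) : ℝ) : ℂ) * X i i := by
      intro X
      simp [Matrix.trace, Matrix.diagonal_mul]
    rw [e2, Complex.re_sum]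
    refine Finset.sum_congr rfl fun i _ => ?_
    rw [Complex.re_ofReal_mul]
  -- Wᴴ M W is diagonal
  have hWMW : Wᴴ * M * W = Matrix.diagonal (fun i => ((lam i : ℝ) : ℂ)) := by
    rw [hMsp,
      show Wᴴ * (W * Matrix.diagonal (fun i => ((lam i : ℝ) : ℂ)) * Wᴴ) * W
          = (Wᴴ * W) * Matrix.diagonal (fun i => ((lam i : ℝ) : ℂ)) * (Wᴴ * W) by
        noncomm_ring,
      hW1, one_mul, mul_one]
  -- the key eigenvalue identity
  have hWKW : ∀ i, lam i + v i = ∑ j, P j i * mu j := by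
    intro i
    have lhs : Wᴴ * (M + V) * W
        = Matrix.diagonal (fun i => ((lam i : ℝ) : ℂ)) + Wᴴ * V * W := by
      rw [Matrix.mul_add, Matrix.add_mul, hWMW]
    have rhs : Wᴴ * (M + V) * W
        = Sᴴ * Matrix.diagonal (fun j => ((mu j : ℝ) : ℂ)) * S := by
      rw [hKsp, hSH, hSdef]
      noncomm_ring
    have entry : ((Sᴴ * Matrix.diagonal (fun j => ((mu j : ℝ) : ℂ)) * S) i i)
        = ∑ j, (starRingEnd ℂ) (S j i) * ((mu j : ℂ) * S j i) := by
      rw [Matrix.mul_apply]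
      refine Finset.sum_congr rfl fun j _ => ?_
      simp only [Matrix.mul_diagonal, Matrix.conjTranspose_apply, Complex.star_def]
      ring
    have e1 : ((Wᴴ * (M + V) * W) i i).re = lam i + v i := by
      rw [lhs]
      simp [Matrix.add_apply, Matrix.diagonal_apply_eq, hvdef]
    have e2 : ((Wᴴ * (M + V) * W) i i).re = ∑ j, P j i * mu j := by
      rw [rhs, entry, Complex.re_sum]
      refine Finset.sum_congr rfl fun j _ => ?_
      rw [conj_mul_re, hPdef]
      ring
    rw [← e1, e2]
  -- weights sum to one
  have hPsum : ∀ i, ∑ j, P j i = 1 := by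
    intro i
    have hS1 : Sᴴ * S = 1 := by
      rw [hSH, hSdef,
        show Wᴴ * U * (Uᴴ * W) = Wᴴ * (U * Uᴴ) * W by noncomm_ring, hU2, mul_one, hW1]
    have entry : ((Sᴴ * S) i i) = ∑ j, ((Complex.normSq (S j i) : ℝ) : ℂ) := by
      rw [Matrix.mul_apply]
      refine Finset.sum_congr rfl fun j _ => ?_
      simp only [Matrix.conjTranspose_apply, Complex.star_def]
      rw [Complex.normSq_eq_conj_mul_self]
    have : ((Sᴴ * S) i i).re = 1 := by rw [hS1]; simp
    rw [entry, Complex.re_sum] at this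
    simpa [hPdef] using this
  -- trace of exp (M+V)
  have htrK : (Matrix.trace (exp (M + V))).re = ∑ i, ∑ j, P j i * Real.exp (mu j) := by
    have e0 : Sᴴ * Matrix.diagonal (fun j => ((Real.exp (mu j) : ℝ) : ℂ)) * S
        = Wᴴ * (U * Matrix.diagonal (fun j => ((Real.exp (mu j) : ℝ) : ℂ)) * Uᴴ) * W := by
      rw [hSH, hSdef]; noncomm_ring
    have hSS : S * Sᴴ = 1 := by
      rw [hSH, hSdef, show Uᴴ * W * (Wᴴ * U) = Uᴴ * (W * Wᴴ) * U by noncomm_ring, hW2,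
        mul_one, hU1]
    have e1 : Matrix.trace (exp (M + V))
        = Matrix.trace (Sᴴ * Matrix.diagonal (fun j => ((Real.exp (mu j) : ℝ) : ℂ)) * S) := by
      rw [hexpK, Matrix.trace_mul_cycle, hU1, one_mul, Matrix.trace_mul_cycle, hSS, one_mul]
    rw [e1, Matrix.trace, Complex.re_sum]
    refine Finset.sum_congr rfl fun i _ => ?_
    have entry : ((Sᴴ * Matrix.diagonal (fun j => ((Real.exp (mu j) : ℝ) : ℂ)) * S) i i)
        = ∑ j, (starRingEnd ℂ) (S j i) * ((Real.exp (mu j) : ℂ) * S j i) := by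
      rw [Matrix.mul_apply]
      refine Finset.sum_congr rfl fun j _ => ?_
      simp only [Matrix.mul_diagonal, Matrix.conjTranspose_apply, Complex.star_def]
      ring
    rw [Matrix.diag_apply, entry, Complex.re_sum]
    refine Finset.sum_congr rfl fun j _ => ?_
    rw [conj_mul_re, hPdef]
    ring
  -- Jensen 1
  have jensen1 : ∀ i, Real.exp (lam i + v i) ≤ ∑ j, P j i * Real.exp (mu j) := by
    intro i
    have := convexOn_exp.map_sum_le (t := Finset.univ) (w := fun j => P j i) (p := mu)
      (fun j _ => Complex.normSq_nonneg _) (hPsum i) (fun j _ => Set.mem_univ _)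
    simpa [smul_eq_mul, ← hWKW i] using this
  -- Jensen 2
  have hwsum : ∑ i, Real.exp (lam i) / Z = 1 := by
    rw [← Finset.sum_div]
    exact div_self (ne_of_gt hZpos)
  have hTZ : T / Z = ∑ i, Real.exp (lam i) / Z * v i := by
    rw [hTdef, Finset.sum_div]
    exact Finset.sum_congr rfl fun i _ => by ring
  have jensen2 : Real.exp (T / Z) ≤ ∑ i, Real.exp (lam i) / Z * Real.exp (v i) := by
    have := convexOn_exp.map_sum_le (t := Finset.univ)
      (w := fun i => Real.exp (lam i) / Z) (p := v)
      (fun i _ => div_nonneg (Real.exp_pos _).le hZpos.le) hwsum (fun i _ => Set.mem_univ _)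
    simpa [smul_eq_mul, ← hTZ] using this
  -- chain
  have step1 : ∑ i, Real.exp (lam i + v i) ≤ (Matrix.trace (exp (M + V))).re := by
    rw [htrK]
    exact Finset.sum_le_sum fun i _ => jensen1 i
  have step2 : Z * Real.exp (T / Z) ≤ ∑ i, Real.exp (lam i + v i) := by
    calc Z * Real.exp (T / Z) ≤ Z * ∑ i, Real.exp (lam i) / Z * Real.exp (v i) :=
          mul_le_mul_of_nonneg_left jensen2 hZpos.le
      _ = ∑ i, Real.exp (lam i + v i) := by
          rw [Finset.mul_sum]
          refine Finset.sum_congr rfl fun i _ => ?_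
          rw [Real.exp_add]
          field_simp
  have hfinal : Z * Real.exp (T / Z) ≤ (Matrix.trace (exp (M + V))).re := step2.trans step1
  have hlog := Real.log_le_log (mul_pos hZpos (Real.exp_pos _)) hfinal
  rw [Real.log_mul (ne_of_gt hZpos) (Real.exp_ne_zero _), Real.log_exp] at hlog
  rw [htrM, htrMV]
  exact hlog

end FreeEnergyAux


open FreeEnergyAux

/-- **Convexity of the free energy.**
For Hermitian `n × n` complex matrices `A` and `B`, the function
`h ↦ log Tr(exp(A + h B))` is convex on `ℝ` (the trace is real and we take
its real part). -/
theorem log_partition_function_convex {n : ℕ}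
    (A B : Matrix (Fin n) (Fin n) ℂ) (hA : A.IsHermitian) (hB : B.IsHermitian) :
    ConvexOn ℝ Set.univ
      (fun h : ℝ => Real.log ((Matrix.trace (NormedSpace.exp (A + (h : ℂ) • B))).re)) := by
  rcases Nat.eq_zero_or_pos n with h0 | hn
  · subst h0
    have hz : ∀ h : ℝ, Matrix.trace (exp (A + (h : ℂ) • B)) = 0 := by
      intro h
      simp [Matrix.trace]
    simp only [hz, Complex.zero_re]
    exact convexOn_const _ convex_univ
  · refine ⟨convex_univ, ?_⟩
    intro x _ y _ a b ha hb hab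
    simp only [smul_eq_mul]
    set h := a * x + b * y with hh
    have key : ∀ t : ℝ,
        Real.log ((Matrix.trace (exp (A + (h : ℂ) • B))).re)
          + (t - h) * ((Matrix.trace (exp (A + (h : ℂ) • B) * B)).re
            / (Matrix.trace (exp (A + (h : ℂ) • B))).re)
        ≤ Real.log ((Matrix.trace (exp (A + (t : ℂ) • B))).re) := by
      intro t
      have hMh : (A + (h : ℂ) • B).IsHermitian := hA.add (herm_real_smul hB h)
      have hVh : ((((t - h : ℝ)) : ℂ) • B).IsHermitian := herm_real_smul hB _
      have htan := tangent hn (A + (h : ℂ) • B) ((((t - h : ℝ)) : ℂ) • B) hMh hVh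
      have hsum : (A + (h : ℂ) • B) + (((t - h : ℝ)) : ℂ) • B = A + (t : ℂ) • B := by
        push_cast
        rw [sub_smul]
        abel
      rw [hsum] at htan
      have htr : (Matrix.trace (exp (A + (h : ℂ) • B) * ((((t - h : ℝ)) : ℂ) • B))).re
          = (t - h) * (Matrix.trace (exp (A + (h : ℂ) • B) * B)).re := by
        rw [mul_smul_comm, Matrix.trace_smul, smul_eq_mul, Complex.re_ofReal_mul]
      rw [htr, mul_div_assoc] at htan
      exact htan
    set L := Real.log ((Matrix.trace (exp (A + (h : ℂ) • B))).re) with hL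
    set c := (Matrix.trace (exp (A + (h : ℂ) • B) * B)).re
      / (Matrix.trace (exp (A + (h : ℂ) • B))).re with hc
    have hx := key x
    have hy := key y
    have h1 := mul_le_mul_of_nonneg_left hx ha
    have h2 := mul_le_mul_of_nonneg_left hy hb
    have h0 : a * (x - h) + b * (y - h) = (a * x + b * y) * (1 - (a + b)) := by
      rw [hh]; ring
    rw [hab] at h0
    simp only [sub_self, mul_zero] at h0
    have hcomb : a * (L + (x - h) * c) + b * (L + (y - h) * c)
        = (a + b) * L + (a * (x - h) + b * (y - h)) * c := by ring
    rw [hab, h0, one_mul, zero_mul, add_zero] at hcomb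
    linarith [h1, h2]
end

section
/- Positivity of the magnetization: let H₀ and M be n×n Hermitian complex matrices, and suppose there exists a unitary n×n matrix V with V·H₀·V* = H₀ and V·M·V* = −M. Then for every real β ≥ 0 and every real h ≥ 0, the Gibbs expectation of M in the field h is nonnegative: Tr(M · exp(−β(H₀ − hM))) ≥ 0. -/
open scoped Matrix
open NormedSpace -- for `exp`


namespace MagnetizationAux

variable {n : ℕ}

local notation "Mat" => Matrix (Fin n) (Fin n) ℂ

lemma exp_unitary_conj (U A : Mat) (hU : U ∈ Matrix.unitaryGroup (Fin n) ℂ) :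
    exp (U * A * Uᴴ) = U * exp A * Uᴴ := by
  have h1 : U * Uᴴ = 1 := by
    simpa [Matrix.star_eq_conjTranspose] using (Matrix.mem_unitaryGroup_iff).mp hU
  have h2 : Uᴴ * U = 1 := by
    simpa [Matrix.star_eq_conjTranspose] using (Matrix.mem_unitaryGroup_iff').mp hU
  have hinv : U⁻¹ = Uᴴ := Matrix.inv_eq_right_inv h1
  rw [← hinv]
  exact Matrix.exp_conj U A ⟨⟨U, Uᴴ, h1, h2⟩, rfl⟩

lemma row_sum (S : Mat) (hS : S ∈ Matrix.unitaryGroup (Fin n) ℂ) (i : Fin n) :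
    ∑ j, Complex.normSq (S i j) = 1 := by
  have h1 : S * Sᴴ = 1 := by
    simpa [Matrix.star_eq_conjTranspose] using (Matrix.mem_unitaryGroup_iff).mp hS
  have h2 : (S * Sᴴ) i i = 1 := by rw [h1]; simp
  have h3 : (S * Sᴴ) i i = ((∑ j, Complex.normSq (S i j) : ℝ) : ℂ) := by
    simp [Matrix.mul_apply, Matrix.conjTranspose_apply, Complex.mul_conj]
  rw [h3] at h2
  exact_mod_cast h2

lemma col_sum (S : Mat) (hS : S ∈ Matrix.unitaryGroup (Fin n) ℂ) (j : Fin n) :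
    ∑ i, Complex.normSq (S i j) = 1 := by
  have h1 : Sᴴ * S = 1 := by
    simpa [Matrix.star_eq_conjTranspose] using (Matrix.mem_unitaryGroup_iff').mp hS
  have h2 : (Sᴴ * S) j j = 1 := by rw [h1]; simp
  have h3 : (Sᴴ * S) j j = ((∑ i, Complex.normSq (S i j) : ℝ) : ℂ) := by
    simp [Matrix.mul_apply, Matrix.conjTranspose_apply, Complex.normSq_eq_conj_mul_self]
  rw [h3] at h2
  exact_mod_cast h2

lemma trace_diag_mul (d : Fin n → ℂ) (X : Mat) :
    Matrix.trace (Matrix.diagonal d * X) = ∑ i, d i * X i i := by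
  simp [Matrix.trace, Matrix.diag, Matrix.diagonal_mul]

lemma trace_conj_mul_conj (U W : Mat) (d e : Fin n → ℂ) :
    Matrix.trace ((W * Matrix.diagonal d * Wᴴ) * (U * Matrix.diagonal e * Uᴴ)) =
      ∑ i, ∑ j, d i * e j * (Complex.normSq ((Wᴴ * U) i j) : ℂ) := by
  have A1 : (W * Matrix.diagonal d * Wᴴ) * (U * Matrix.diagonal e * Uᴴ)
      = W * (Matrix.diagonal d * (Wᴴ * (U * (Matrix.diagonal e * Uᴴ)))) := by
    simp only [Matrix.mul_assoc]
  rw [A1, Matrix.trace_mul_comm]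
  have A2 : Matrix.diagonal d * (Wᴴ * (U * (Matrix.diagonal e * Uᴴ))) * W
      = Matrix.diagonal d * ((Wᴴ * U) * Matrix.diagonal e * (Wᴴ * U)ᴴ) := by
    simp only [Matrix.conjTranspose_mul, Matrix.conjTranspose_conjTranspose, Matrix.mul_assoc]
  rw [A2, trace_diag_mul]
  refine Finset.sum_congr rfl fun i _ => ?_
  have entry : ((Wᴴ * U) * Matrix.diagonal e * (Wᴴ * U)ᴴ) i i
      = ∑ j, e j * (Complex.normSq ((Wᴴ * U) i j) : ℂ) := by
    rw [Matrix.mul_apply]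
    refine Finset.sum_congr rfl fun j _ => ?_
    rw [Matrix.mul_diagonal, Matrix.conjTranspose_apply]
    calc (Wᴴ * U) i j * e j * star ((Wᴴ * U) i j)
        = e j * ((Wᴴ * U) i j * (starRingEnd ℂ) ((Wᴴ * U) i j)) := by
          rw [Complex.star_def]; ring
      _ = e j * (Complex.normSq ((Wᴴ * U) i j) : ℂ) := by rw [Complex.mul_conj]
  rw [entry, Finset.mul_sum]
  exact Finset.sum_congr rfl fun j _ => by ring

lemma klein (A B : Matrix (Fin n) (Fin n) ℂ) (hA : A.IsHermitian) (hB : B.IsHermitian) :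
    (Matrix.trace ((B - A) * exp A)).re
      ≤ (Matrix.trace (exp B)).re - (Matrix.trace (exp A)).re := by
  set U : Matrix (Fin n) (Fin n) ℂ := ↑hA.eigenvectorUnitary with hUdef
  set W : Matrix (Fin n) (Fin n) ℂ := ↑hB.eigenvectorUnitary with hWdef
  have hU : U ∈ Matrix.unitaryGroup (Fin n) ℂ := hA.eigenvectorUnitary.2
  have hW : W ∈ Matrix.unitaryGroup (Fin n) ℂ := hB.eigenvectorUnitary.2
  set lam := hA.eigenvalues with hlam
  set mu := hB.eigenvalues with hmu
  have hAe : A = U * Matrix.diagonal (fun i => (lam i : ℂ)) * Uᴴ := by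
    simpa [Matrix.star_eq_conjTranspose, Function.comp_def] using hA.spectral_theorem
  have hBe : B = W * Matrix.diagonal (fun i => (mu i : ℂ)) * Wᴴ := by
    simpa [Matrix.star_eq_conjTranspose, Function.comp_def] using hB.spectral_theorem
  have hdiag : ∀ (v : Fin n → ℝ), exp (Matrix.diagonal (fun i => (v i : ℂ)))
      = Matrix.diagonal (fun i => (Real.exp (v i) : ℂ)) := by
    intro v
    have hv : (exp fun i => ((v i : ℂ))) = fun i => ((Real.exp (v i) : ℂ)) := by
      funext i
      rw [Pi.coe_exp, ← Complex.exp_eq_exp_ℂ, Complex.ofReal_exp]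
    rw [Matrix.exp_diagonal, hv]
  have hUU : Uᴴ * U = 1 := by
    simpa [Matrix.star_eq_conjTranspose] using (Matrix.mem_unitaryGroup_iff').mp hU
  have hWW : Wᴴ * W = 1 := by
    simpa [Matrix.star_eq_conjTranspose] using (Matrix.mem_unitaryGroup_iff').mp hW
  have hexpA : exp A = U * Matrix.diagonal (fun i => (Real.exp (lam i) : ℂ)) * Uᴴ := by
    rw [hAe, exp_unitary_conj _ _ hU, hdiag]
  have hexpB : exp B = W * Matrix.diagonal (fun i => (Real.exp (mu i) : ℂ)) * Wᴴ := by
    rw [hBe, exp_unitary_conj _ _ hW, hdiag]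
  have tA : Matrix.trace (exp A) = ((∑ i, Real.exp (lam i) : ℝ) : ℂ) := by
    rw [hexpA, Matrix.trace_mul_cycle, hUU, Matrix.one_mul, Matrix.trace_diagonal]
    push_cast
    rfl
  have tB : Matrix.trace (exp B) = ((∑ i, Real.exp (mu i) : ℝ) : ℂ) := by
    rw [hexpB, Matrix.trace_mul_cycle, hWW, Matrix.one_mul, Matrix.trace_diagonal]
    push_cast
    rfl
  have tAA : Matrix.trace (A * exp A) = ((∑ i, lam i * Real.exp (lam i) : ℝ) : ℂ) := by
    have key : A * exp A
        = U * Matrix.diagonal (fun i => (lam i : ℂ) * (Real.exp (lam i) : ℂ)) * Uᴴ := by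
      rw [hexpA, hAe, ← Matrix.diagonal_mul_diagonal]
      have : Uᴴ * (U * (Matrix.diagonal (fun i => (Real.exp (lam i) : ℂ)) * Uᴴ))
          = Matrix.diagonal (fun i => (Real.exp (lam i) : ℂ)) * Uᴴ := by
        rw [← Matrix.mul_assoc, hUU, Matrix.one_mul]
      simp only [Matrix.mul_assoc, this]
    rw [key, Matrix.trace_mul_cycle, hUU, Matrix.one_mul, Matrix.trace_diagonal]
    push_cast
    rfl
  set c : Fin n → Fin n → ℝ := fun i j => Complex.normSq ((Wᴴ * U) i j) with hc
  have tBA : Matrix.trace (B * exp A)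
      = ((∑ i, ∑ j, mu i * Real.exp (lam j) * c i j : ℝ) : ℂ) := by
    rw [hBe, hexpA, trace_conj_mul_conj]
    push_cast
    rfl
  have hS : Wᴴ * U ∈ Matrix.unitaryGroup (Fin n) ℂ := by
    have h1 : Wᴴ ∈ Matrix.unitaryGroup (Fin n) ℂ := by
      rw [← Matrix.star_eq_conjTranspose]
      exact Unitary.star_mem hW
    exact mul_mem h1 hU
  have hrow : ∀ i, ∑ j, c i j = 1 := row_sum (Wᴴ * U) hS
  have hcol : ∀ j, ∑ i, c i j = 1 := col_sum (Wᴴ * U) hS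
  have hBA : Matrix.trace ((B - A) * exp A)
      = Matrix.trace (B * exp A) - Matrix.trace (A * exp A) := by
    rw [Matrix.sub_mul, Matrix.trace_sub]
  rw [hBA, Complex.sub_re, tBA, tAA, tB, tA, Complex.ofReal_re, Complex.ofReal_re,
    Complex.ofReal_re, Complex.ofReal_re]
  -- now a real inequality
  have step : ∀ i j, mu i * Real.exp (lam j) * c i j
      ≤ (Real.exp (mu i) - Real.exp (lam j) + lam j * Real.exp (lam j)) * c i j := by
    intro i j
    have h1 := Real.add_one_le_exp (mu i - lam j)
    have h3 : Real.exp (mu i - lam j) * Real.exp (lam j) = Real.exp (mu i) := by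
      rw [← Real.exp_add]; ring_nf
    have h2 := (Real.exp_pos (lam j)).le
    have hcn : (0:ℝ) ≤ c i j := Complex.normSq_nonneg _
    nlinarith [mul_le_mul_of_nonneg_right h1 h2]
  have main : (∑ i, ∑ j, mu i * Real.exp (lam j) * c i j)
      ≤ ∑ i, ∑ j, (Real.exp (mu i) - Real.exp (lam j) + lam j * Real.exp (lam j)) * c i j :=
    Finset.sum_le_sum fun i _ => Finset.sum_le_sum fun j _ => step i j
  have e1 : ∑ i, ∑ j, Real.exp (mu i) * c i j = ∑ i, Real.exp (mu i) :=
    Finset.sum_congr rfl fun i _ => by rw [← Finset.mul_sum, hrow, mul_one]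
  have e2 : ∑ i : Fin n, ∑ j, Real.exp (lam j) * c i j = ∑ j, Real.exp (lam j) := by
    rw [Finset.sum_comm]
    exact Finset.sum_congr rfl fun j _ => by rw [← Finset.mul_sum, hcol, mul_one]
  have e3 : ∑ i : Fin n, ∑ j, lam j * Real.exp (lam j) * c i j
      = ∑ j, lam j * Real.exp (lam j) := by
    rw [Finset.sum_comm]
    exact Finset.sum_congr rfl fun j _ => by rw [← Finset.mul_sum, hcol, mul_one]
  have expand : ∑ i, ∑ j, (Real.exp (mu i) - Real.exp (lam j) + lam j * Real.exp (lam j)) * c i j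
      = (∑ i, Real.exp (mu i)) - (∑ j, Real.exp (lam j)) + ∑ j, lam j * Real.exp (lam j) := by
    simp_rw [add_mul, sub_mul, Finset.sum_add_distrib, Finset.sum_sub_distrib]
    rw [e1, e2, e3]
  rw [expand] at main
  linarith
end MagnetizationAux


open MagnetizationAux

/-- **Positivity of the magnetization.**
If `H₀`, `M` are Hermitian and a unitary `V` satisfies `V H₀ V* = H₀` and `V M V* = -M`,
then for `β ≥ 0` and `h ≥ 0` the (unnormalized) Gibbs expectation of `M` is
nonnegative: `Tr(M exp(-β(H₀ - hM))) ≥ 0` (the trace is real and we take its real part). -/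
theorem magnetization_nonneg {n : ℕ}
    (H₀ M : Matrix (Fin n) (Fin n) ℂ) (hH₀ : H₀.IsHermitian) (hM : M.IsHermitian)
    (V : Matrix (Fin n) (Fin n) ℂ) (hV : V ∈ Matrix.unitaryGroup (Fin n) ℂ)
    (hVH : V * H₀ * Vᴴ = H₀) (hVM : V * M * Vᴴ = -M)
    (β : ℝ) (hβ : 0 ≤ β) (h : ℝ) (hh : 0 ≤ h) :
    0 ≤ (Matrix.trace (M * exp ((-β : ℂ) • (H₀ - (h : ℂ) • M)))).re := by
  set X : Matrix (Fin n) (Fin n) ℂ := (-β : ℂ) • (H₀ - (h : ℂ) • M) with hXdef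
  have hVV : Vᴴ * V = 1 := by
    simpa [Matrix.star_eq_conjTranspose] using (Matrix.mem_unitaryGroup_iff').mp hV
  have hVV' : V * Vᴴ = 1 := by
    simpa [Matrix.star_eq_conjTranspose] using (Matrix.mem_unitaryGroup_iff).mp hV
  have hX : X.IsHermitian := by
    show Xᴴ = X
    simp [hXdef, Matrix.conjTranspose_smul, Matrix.conjTranspose_sub, hH₀.eq, hM.eq,
      Complex.star_def, Complex.conj_ofReal]
  have hY : V * X * Vᴴ = X - ((2 : ℂ) * β * h) • M := by
    have e1 : V * X * Vᴴ = (-β : ℂ) • (V * H₀ * Vᴴ - (h : ℂ) • (V * M * Vᴴ)) := by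
      simp [hXdef, Matrix.smul_mul, Matrix.mul_smul, Matrix.sub_mul, Matrix.mul_sub]
    rw [e1, hVH, hVM, hXdef]
    module
  have hYH : (V * X * Vᴴ).IsHermitian := by
    show (V * X * Vᴴ)ᴴ = V * X * Vᴴ
    simp [Matrix.conjTranspose_mul, Matrix.mul_assoc, hX.eq]
  have hExpY : exp (V * X * Vᴴ) = V * exp X * Vᴴ := exp_unitary_conj V X hV
  have htr : Matrix.trace (exp (V * X * Vᴴ)) = Matrix.trace (exp X) := by
    rw [hExpY, Matrix.trace_mul_cycle, hVV, Matrix.one_mul]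
  by_cases hbh : β * h = 0
  · -- odd case : the trace vanishes
    have hc0 : ((2 : ℂ) * β * h) = 0 := by
      have : ((2 : ℂ) * β * h) = ((2 * (β * h) : ℝ) : ℂ) := by push_cast; ring
      rw [this, hbh]; simp
    have hY0 : V * X * Vᴴ = X := by rw [hY, hc0, zero_smul, sub_zero]
    have e : exp X = V * exp X * Vᴴ := by
      conv_lhs => rw [← hY0, hExpY]
    have hVMV : Vᴴ * M * V = -M := by
      have h1 := congrArg (fun A => Vᴴ * A * V) hVM
      change Vᴴ * (V * M * Vᴴ) * V = Vᴴ * -M * V at h1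
      have h2 : Vᴴ * (V * M * Vᴴ) * V = M := by
        calc Vᴴ * (V * M * Vᴴ) * V = Vᴴ * (V * (M * (Vᴴ * V))) := by
              simp only [Matrix.mul_assoc]
          _ = M := by rw [hVV, Matrix.mul_one, ← Matrix.mul_assoc, hVV, Matrix.one_mul]
      rw [h2, Matrix.mul_neg, Matrix.neg_mul] at h1
      simpa using (congrArg Neg.neg h1).symm
    have key : (M * exp X).trace = -((M * exp X).trace) := by
      conv_lhs => rw [e]
      rw [show M * (V * exp X * Vᴴ) = M * V * exp X * Vᴴ from by
        simp only [Matrix.mul_assoc], Matrix.trace_mul_cycle,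
        show Vᴴ * (M * V) = Vᴴ * M * V from (Matrix.mul_assoc _ _ _).symm, hVMV]
      simp [Matrix.neg_mul, Matrix.trace_neg]
    have hz : (M * exp X).trace = 0 := by
      linear_combination key / 2
    rw [hz]
    simp
  · -- positive field case : Klein's inequality
    have klein1 := klein X (V * X * Vᴴ) hX hYH
    rw [htr, sub_self] at klein1
    have hdiff : V * X * Vᴴ - X = -(((2 : ℂ) * β * h) • M) := by
      rw [hY]; abel
    rw [hdiff] at klein1
    have htrv : ((-(((2 : ℂ) * β * h) • M)) * exp X).trace
        = -(((2 * (β * h) : ℝ) : ℂ) * (M * exp X).trace) := by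
      rw [Matrix.neg_mul, Matrix.trace_neg, Matrix.smul_mul, Matrix.trace_smul]
      push_cast
      ring_nf
    rw [htrv] at klein1
    have hre : (-(((2 * (β * h) : ℝ) : ℂ) * (M * exp X).trace)).re
        = -(2 * (β * h) * ((M * exp X).trace).re) := by
      simp [Complex.mul_re]
    rw [hre] at klein1
    have hpos : 0 < 2 * (β * h) := by
      have : 0 < β * h := (mul_nonneg hβ hh).lt_of_ne' hbh
      linarith
    nlinarith [klein1]
end
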